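/- arXiv:1311.6859 — 6 statements merged into one kernel-verified Lean document; each statement's English description precedes it below -/
import Mathlib

section
/- Let n ≥ 1 and let g, G : ℝⁿ × ℝⁿ → ℂ be measurable functions with A := ess sup_{ξ∈ℝⁿ} ( ∫_{ℝⁿ} |g(η,ξ)|² dη )^{1/2} < ∞ and B := ess sup_{η∈ℝⁿ} ( ∫_{ℝⁿ} |G(η,ξ)|² dξ )^{1/2} < ∞. Then for every u ∈ L²(ℝⁿ;ℂ), the integral (Tu)(η) := ∫_{ℝⁿ} G(η,ξ) g(η−ξ,ξ) u(ξ) dξ converges absolutely for almost every η ∈ ℝⁿ, the resulting function Tu belongs to L²(ℝⁿ), and ‖Tu‖_{L²} ≤ A · B · ‖u‖_{L²}. -/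
open MeasureTheory
open scoped ENNReal

noncomputable section

/-- Euclidean space `ℝⁿ`. -/
abbrev Euc (n : ℕ) := EuclideanSpace ℝ (Fin n)

/-- The `L²` norm as a lintegral of the square of the pointwise norm. -/
lemma eLpNorm_two_eq_lintegral_sq {α : Type*} {m : MeasurableSpace α} (μ : Measure α)
    (f : α → ℂ) :
    eLpNorm f 2 μ = (∫⁻ x, (‖f x‖₊ : ℝ≥0∞) ^ 2 ∂μ) ^ (1 / 2 : ℝ) := by
  rw [eLpNorm_eq_lintegral_rpow_enorm_toReal (by norm_num) (by norm_num)]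
  congr 1
  refine lintegral_congr fun x => ?_
  rw [← ENNReal.rpow_natCast (‖f x‖₊ : ℝ≥0∞) 2]
  norm_num; rfl

/-- **Schur-type boundedness criterion** (Lemma 3.6 of the paper, following Beals–Reed).
Let `g, G : ℝⁿ × ℝⁿ → ℂ` be measurable with
`A = ess sup_ξ ‖g(·,ξ)‖_{L²} < ∞` and `B = ess sup_η ‖G(η,·)‖_{L²} < ∞` (expressed here by
the a.e. bounds `∫ |g(η,ξ)|² dη ≤ A²` and `∫ |G(η,ξ)|² dξ ≤ B²`).  Then for every
`u ∈ L²(ℝⁿ)` the integral `(Tu)(η) = ∫ G(η,ξ) g(η−ξ,ξ) u(ξ) dξ` converges absolutely for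
a.e. `η`, the function `Tu` is in `L²`, and `‖Tu‖_{L²} ≤ A · B · ‖u‖_{L²}`. -/
theorem schur_type_estimate (n : ℕ) (hn : 1 ≤ n)
    (g G : Euc n → Euc n → ℂ)
    (hg : Measurable (Function.uncurry g)) (hG : Measurable (Function.uncurry G))
    (A B : ℝ) (hA0 : 0 ≤ A) (hB0 : 0 ≤ B)
    (hA : ∀ᵐ ξ : Euc n, (∫⁻ η : Euc n, (‖g η ξ‖₊ : ℝ≥0∞) ^ 2) ≤ ENNReal.ofReal (A ^ 2))
    (hB : ∀ᵐ η : Euc n, (∫⁻ ξ : Euc n, (‖G η ξ‖₊ : ℝ≥0∞) ^ 2) ≤ ENNReal.ofReal (B ^ 2))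
    (u : Euc n → ℂ) (hu : MemLp u 2 volume) :
    (∀ᵐ η : Euc n, Integrable (fun ξ => G η ξ * g (η - ξ) ξ * u ξ)) ∧
    MemLp (fun η => ∫ ξ, G η ξ * g (η - ξ) ξ * u ξ) 2 volume ∧
    eLpNorm (fun η => ∫ ξ, G η ξ * g (η - ξ) ξ * u ξ) 2 volume ≤
      ENNReal.ofReal (A * B) * eLpNorm u 2 volume := by
  classical
  have hum : AEStronglyMeasurable u volume := hu.1
  have huae : AEMeasurable u (volume : Measure (Euc n)) := hum.aemeasurable
  -- measurability of the shifted kernel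
  have hgm : Measurable (fun p : Euc n × Euc n => g (p.1 - p.2) p.2) :=
    hg.comp ((measurable_fst.sub measurable_snd).prodMk measurable_snd)
  -- the full integrand on the product space
  have hFm : AEStronglyMeasurable
      (fun p : Euc n × Euc n => G p.1 p.2 * g (p.1 - p.2) p.2 * u p.2)
      ((volume : Measure (Euc n)).prod volume) :=
    ((hG.aestronglyMeasurable.mul hgm.aestronglyMeasurable).mul hum.comp_snd)
  -- auxiliary ℝ≥0∞-valued functions
  set I : Euc n → ℝ≥0∞ :=
    fun η => ∫⁻ ξ, ((‖g (η - ξ) ξ‖₊ : ℝ≥0∞) * ‖u ξ‖₊) ^ 2 with hIdef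
  have hφae : AEMeasurable
      (fun p : Euc n × Euc n => ((‖g (p.1 - p.2) p.2‖₊ : ℝ≥0∞) * ‖u p.2‖₊) ^ 2)
      ((volume : Measure (Euc n)).prod volume) :=
    ((hgm.enorm.aemeasurable.mul
      (huae.enorm.comp_quasiMeasurePreserving
        MeasureTheory.Measure.quasiMeasurePreserving_snd)).pow_const 2)
  set N : ℝ≥0∞ := ∫⁻ ξ, (‖u ξ‖₊ : ℝ≥0∞) ^ 2 with hNdef
  -- Step 1 : ∫ I ≤ A² N
  have hI_int : (∫⁻ η, I η) ≤ ENNReal.ofReal (A ^ 2) * N := by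
    have hswap : (∫⁻ η, I η) =
        ∫⁻ ξ, ∫⁻ η, ((‖g (η - ξ) ξ‖₊ : ℝ≥0∞) * ‖u ξ‖₊) ^ 2 :=
      lintegral_lintegral_swap hφae
    rw [hswap]
    have hpt : ∀ᵐ ξ : Euc n,
        (∫⁻ η, ((‖g (η - ξ) ξ‖₊ : ℝ≥0∞) * ‖u ξ‖₊) ^ 2) ≤
          ENNReal.ofReal (A ^ 2) * (‖u ξ‖₊ : ℝ≥0∞) ^ 2 := by
      filter_upwards [hA] with ξ hAξ
      have h1 : (∫⁻ η, ((‖g (η - ξ) ξ‖₊ : ℝ≥0∞) * ‖u ξ‖₊) ^ 2) =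
          (∫⁻ η, (‖g (η - ξ) ξ‖₊ : ℝ≥0∞) ^ 2) * (‖u ξ‖₊ : ℝ≥0∞) ^ 2 := by
        simp_rw [mul_pow]
        exact lintegral_mul_const' _ _ (by simp)
      have h2 : (∫⁻ η, (‖g (η - ξ) ξ‖₊ : ℝ≥0∞) ^ 2) =
          ∫⁻ η, (‖g η ξ‖₊ : ℝ≥0∞) ^ 2 :=
        lintegral_sub_right_eq_self (fun η => (‖g η ξ‖₊ : ℝ≥0∞) ^ 2) ξ
      rw [h1, h2]
      exact mul_le_mul_left hAξ _
    calc (∫⁻ ξ, ∫⁻ η, ((‖g (η - ξ) ξ‖₊ : ℝ≥0∞) * ‖u ξ‖₊) ^ 2)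
        ≤ ∫⁻ ξ, ENNReal.ofReal (A ^ 2) * (‖u ξ‖₊ : ℝ≥0∞) ^ 2 := lintegral_mono_ae hpt
      _ = ENNReal.ofReal (A ^ 2) * N := by
          rw [hNdef]
          exact lintegral_const_mul' _ _ (by simp)
  -- N is finite
  have heu : eLpNorm u 2 volume = N ^ (1 / 2 : ℝ) := by
    rw [eLpNorm_two_eq_lintegral_sq]
  have hN_fin : N ≠ ⊤ := by
    intro hN
    have h2 : eLpNorm u 2 volume < ⊤ := hu.2
    rw [heu, hN, ENNReal.top_rpow_of_pos (by norm_num)] at h2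
    exact absurd h2 (lt_irrefl _)
  have hIN_fin : (∫⁻ η, I η) ≠ ⊤ :=
    ne_top_of_le_ne_top (ENNReal.mul_ne_top ENNReal.ofReal_ne_top hN_fin) hI_int
  -- a.e. finiteness of I using a measurable modification
  have hI_ae : ∀ᵐ η : Euc n, I η < ⊤ := by
    set φ' := hφae.mk _ with hφ'def
    have hIeq : ∀ᵐ η : Euc n, I η = ∫⁻ ξ, φ' (η, ξ) := by
      filter_upwards [MeasureTheory.Measure.ae_ae_of_ae_prod hφae.ae_eq_mk] with η hη
      exact lintegral_congr_ae hη
    have hI'm : Measurable fun η => ∫⁻ ξ, φ' (η, ξ) :=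
      hφae.measurable_mk.lintegral_prod_right'
    have hI'int : (∫⁻ η, ∫⁻ ξ, φ' (η, ξ)) ≠ ⊤ := by
      rw [← lintegral_congr_ae hIeq]
      exact hIN_fin
    filter_upwards [hIeq, ae_lt_top hI'm hI'int] with η h1 h2
    rw [h1]; exact h2
  -- Cauchy–Schwarz pointwise in η
  have hCS : ∀ η : Euc n,
      (∫⁻ ξ, (‖G η ξ * g (η - ξ) ξ * u ξ‖₊ : ℝ≥0∞)) ≤
        (∫⁻ ξ, (‖G η ξ‖₊ : ℝ≥0∞) ^ 2) ^ (1 / 2 : ℝ) * (I η) ^ (1 / 2 : ℝ) := by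
    intro η
    have hconj : Real.HolderConjugate 2 2 := Real.HolderConjugate.two_two
    have hGmη : Measurable fun ξ => G η ξ := hG.comp measurable_prodMk_left
    have hgmη : Measurable fun ξ => g (η - ξ) ξ := hgm.comp measurable_prodMk_left
    have hGae : AEMeasurable (fun ξ => (‖G η ξ‖₊ : ℝ≥0∞)) volume :=
      hGmη.enorm.aemeasurable
    have hrest : AEMeasurable
        (fun ξ => (‖g (η - ξ) ξ‖₊ : ℝ≥0∞) * ‖u ξ‖₊) volume :=
      hgmη.enorm.aemeasurable.mul huae.enorm
    have key := ENNReal.lintegral_mul_le_Lp_mul_Lq volume hconj hGae hrest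
    calc (∫⁻ ξ, (‖G η ξ * g (η - ξ) ξ * u ξ‖₊ : ℝ≥0∞))
        = ∫⁻ ξ, (‖G η ξ‖₊ : ℝ≥0∞) * ((‖g (η - ξ) ξ‖₊ : ℝ≥0∞) * ‖u ξ‖₊) := by
          refine lintegral_congr fun ξ => ?_
          simp [nnnorm_mul, ENNReal.coe_mul, mul_assoc]
      _ ≤ (∫⁻ ξ, (‖G η ξ‖₊ : ℝ≥0∞) ^ (2 : ℝ)) ^ (1 / 2 : ℝ) *
            (∫⁻ ξ, ((‖g (η - ξ) ξ‖₊ : ℝ≥0∞) * ‖u ξ‖₊) ^ (2 : ℝ)) ^ (1 / 2 : ℝ) := key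
      _ = (∫⁻ ξ, (‖G η ξ‖₊ : ℝ≥0∞) ^ 2) ^ (1 / 2 : ℝ) * (I η) ^ (1 / 2 : ℝ) := by
          have e1 : (∫⁻ ξ, (‖G η ξ‖₊ : ℝ≥0∞) ^ (2 : ℝ)) =
              ∫⁻ ξ, (‖G η ξ‖₊ : ℝ≥0∞) ^ 2 := by
            refine lintegral_congr fun ξ => ?_
            rw [← ENNReal.rpow_natCast (‖G η ξ‖₊ : ℝ≥0∞) 2]; norm_num
          have e2 : (∫⁻ ξ, ((‖g (η - ξ) ξ‖₊ : ℝ≥0∞) * ‖u ξ‖₊) ^ (2 : ℝ)) = I η := by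
            refine lintegral_congr fun ξ => ?_
            rw [← ENNReal.rpow_natCast ((‖g (η - ξ) ξ‖₊ : ℝ≥0∞) * ‖u ξ‖₊) 2]; norm_num
          rw [e1, e2]
  have hCS' : ∀ᵐ η : Euc n,
      (∫⁻ ξ, (‖G η ξ * g (η - ξ) ξ * u ξ‖₊ : ℝ≥0∞)) ≤
        (ENNReal.ofReal (B ^ 2)) ^ (1 / 2 : ℝ) * (I η) ^ (1 / 2 : ℝ) := by
    filter_upwards [hB] with η hBη
    exact (hCS η).trans
      (mul_le_mul_left (ENNReal.rpow_le_rpow hBη (by norm_num)) _)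
  -- absolute convergence for a.e. η
  have hInt : ∀ᵐ η : Euc n, Integrable (fun ξ => G η ξ * g (η - ξ) ξ * u ξ) := by
    filter_upwards [hCS', hI_ae, hFm.prodMk_left] with η hCSη hIη hFη
    refine ⟨hFη, ?_⟩
    refine lt_of_le_of_lt hCSη ?_
    exact ENNReal.mul_lt_top
      (ENNReal.rpow_lt_top_of_nonneg (by norm_num) ENNReal.ofReal_ne_top)
      (ENNReal.rpow_lt_top_of_nonneg (by norm_num) hIη.ne)
  refine ⟨hInt, ?_⟩
  -- the square of the norm of Tu is a.e. bounded by B² * I η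
  have hTu_pt : ∀ᵐ η : Euc n,
      (‖∫ ξ, G η ξ * g (η - ξ) ξ * u ξ‖₊ : ℝ≥0∞) ^ 2 ≤
        ENNReal.ofReal (B ^ 2) * I η := by
    filter_upwards [hCS'] with η hCSη
    have h1 : (‖∫ ξ, G η ξ * g (η - ξ) ξ * u ξ‖₊ : ℝ≥0∞) ≤
        ∫⁻ ξ, (‖G η ξ * g (η - ξ) ξ * u ξ‖₊ : ℝ≥0∞) :=
      enorm_integral_le_lintegral_enorm _
    calc (‖∫ ξ, G η ξ * g (η - ξ) ξ * u ξ‖₊ : ℝ≥0∞) ^ 2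
        ≤ ((ENNReal.ofReal (B ^ 2)) ^ (1 / 2 : ℝ) * (I η) ^ (1 / 2 : ℝ)) ^ 2 :=
          pow_le_pow_left' (h1.trans hCSη) 2
      _ = ENNReal.ofReal (B ^ 2) * I η := by
          rw [mul_pow, ← ENNReal.rpow_natCast ((ENNReal.ofReal (B ^ 2)) ^ (1 / 2 : ℝ)) 2,
            ← ENNReal.rpow_natCast ((I η) ^ (1 / 2 : ℝ)) 2,
            ← ENNReal.rpow_mul, ← ENNReal.rpow_mul]
          norm_num
  -- bound the L² norm squared
  have hTu2 : (∫⁻ η, (‖∫ ξ, G η ξ * g (η - ξ) ξ * u ξ‖₊ : ℝ≥0∞) ^ 2) ≤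
      ENNReal.ofReal (B ^ 2) * (ENNReal.ofReal (A ^ 2) * N) := by
    calc (∫⁻ η, (‖∫ ξ, G η ξ * g (η - ξ) ξ * u ξ‖₊ : ℝ≥0∞) ^ 2)
        ≤ ∫⁻ η, ENNReal.ofReal (B ^ 2) * I η := lintegral_mono_ae hTu_pt
      _ = ENNReal.ofReal (B ^ 2) * ∫⁻ η, I η := lintegral_const_mul' _ _ (by simp)
      _ ≤ ENNReal.ofReal (B ^ 2) * (ENNReal.ofReal (A ^ 2) * N) :=
          mul_le_mul_right hI_int _
  -- identify the eLpNorms and conclude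
  have hTm : AEStronglyMeasurable (fun η => ∫ ξ, G η ξ * g (η - ξ) ξ * u ξ)
      (volume : Measure (Euc n)) := hFm.integral_prod_right'
  have heT : eLpNorm (fun η => ∫ ξ, G η ξ * g (η - ξ) ξ * u ξ) 2 volume =
      (∫⁻ η, (‖∫ ξ, G η ξ * g (η - ξ) ξ * u ξ‖₊ : ℝ≥0∞) ^ 2) ^ (1 / 2 : ℝ) :=
    eLpNorm_two_eq_lintegral_sq _ _
  have hmain : eLpNorm (fun η => ∫ ξ, G η ξ * g (η - ξ) ξ * u ξ) 2 volume ≤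
      ENNReal.ofReal (A * B) * eLpNorm u 2 volume := by
    rw [heT, heu]
    calc (∫⁻ η, (‖∫ ξ, G η ξ * g (η - ξ) ξ * u ξ‖₊ : ℝ≥0∞) ^ 2) ^ (1 / 2 : ℝ)
        ≤ (ENNReal.ofReal (B ^ 2) * (ENNReal.ofReal (A ^ 2) * N)) ^ (1 / 2 : ℝ) :=
          ENNReal.rpow_le_rpow hTu2 (by norm_num)
      _ = ENNReal.ofReal (A * B) * N ^ (1 / 2 : ℝ) := by
          rw [ENNReal.mul_rpow_of_nonneg _ _ (by norm_num),
            ENNReal.mul_rpow_of_nonneg _ _ (by norm_num)]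
          have hB2 : (ENNReal.ofReal (B ^ 2)) ^ (1 / 2 : ℝ) = ENNReal.ofReal B := by
            rw [ENNReal.ofReal_pow hB0, ← ENNReal.rpow_natCast (ENNReal.ofReal B) 2,
              ← ENNReal.rpow_mul]
            norm_num
          have hA2 : (ENNReal.ofReal (A ^ 2)) ^ (1 / 2 : ℝ) = ENNReal.ofReal A := by
            rw [ENNReal.ofReal_pow hA0, ← ENNReal.rpow_natCast (ENNReal.ofReal A) 2,
              ← ENNReal.rpow_mul]
            norm_num
          rw [hB2, hA2, ← mul_assoc, ← ENNReal.ofReal_mul hB0, mul_comm B A]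
  exact ⟨⟨hTm, lt_of_le_of_lt hmain (ENNReal.mul_lt_top ENNReal.ofReal_lt_top
    (by rw [heu]; exact ENNReal.rpow_lt_top_of_nonneg (by norm_num) hN_fin))⟩, hmain⟩
end
end

section
/- Let n ≥ 1 and let s, r ∈ ℝ satisfy s ≥ r and s > n/2 + max(−r, 0). Then there exists a constant C < ∞ such that for every η ∈ ℝⁿ one has ∫_{ℝⁿ} ⟨η⟩^{2r} · ⟨η−ξ⟩^{−2s} · ⟨ξ⟩^{−2r} dξ ≤ C; that is, the kernel G(η,ξ) := ⟨η⟩^r / (⟨η−ξ⟩^s ⟨ξ⟩^r) lies in L^∞_η L²_ξ(ℝⁿ × ℝⁿ). -/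
open MeasureTheory
open scoped ENNReal

noncomputable section

/-- The Japanese bracket `⟨x⟩ = √(1 + ‖x‖²)`. -/
noncomputable def jb {n : ℕ} (x : Euc n) : ℝ := Real.sqrt (1 + ‖x‖ ^ 2)

lemma one_le_jb {n : ℕ} (x : Euc n) : 1 ≤ jb x := by
  have h : Real.sqrt 1 ≤ Real.sqrt (1 + ‖x‖ ^ 2) :=
    Real.sqrt_le_sqrt (by nlinarith [sq_nonneg ‖x‖])
  simpa [jb] using h

lemma jb_sq {n : ℕ} (x : Euc n) : jb x ^ 2 = 1 + ‖x‖ ^ 2 :=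
  Real.sq_sqrt (by positivity)

/-- The key pointwise inequality, in abstract form. -/
lemma key_ineq (s r A B H : ℝ) (hA : 1 ≤ A) (hB : 1 ≤ B) (hH : 1 ≤ H)
    (hsr : r ≤ s) (hH2 : H ≤ 2 * max A B) (hB2 : B ≤ 2 * (H * A)) :
    H ^ (2*r) * A ^ (-(2*s)) * B ^ (-(2*r)) ≤
      2 ^ (2*|r|+1) * (A ^ (-(2*(s - max (-r) 0))) + B ^ (-(2*(s - max (-r) 0)))) := by
  have A0 : (0:ℝ) < A := by linarith
  have B0 : (0:ℝ) < B := by linarith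
  have H0 : (0:ℝ) < H := by linarith
  rcases le_or_gt 0 r with hr | hr
  · -- case `0 ≤ r`
    have hmax : max (-r) 0 = 0 := max_eq_right (by linarith)
    rw [hmax, abs_of_nonneg hr, sub_zero]
    have h1 : H ^ (2*r) ≤ 2 ^ (2*r) * (A ^ (2*r) + B ^ (2*r)) := by
      calc H ^ (2*r) ≤ (2 * max A B) ^ (2*r) :=
            Real.rpow_le_rpow (by positivity) hH2 (by positivity)
        _ = 2 ^ (2*r) * (max A B) ^ (2*r) :=
            Real.mul_rpow (by norm_num) (by positivity)
        _ ≤ 2 ^ (2*r) * (A ^ (2*r) + B ^ (2*r)) := by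
            have : (max A B) ^ (2*r) ≤ A ^ (2*r) + B ^ (2*r) := by
              rcases max_cases A B with ⟨h, _⟩ | ⟨h, _⟩ <;> rw [h]
              · nlinarith [Real.rpow_nonneg B0.le (2*r)]
              · nlinarith [Real.rpow_nonneg A0.le (2*r)]
            have h2 : (0:ℝ) ≤ 2 ^ (2*r) := Real.rpow_nonneg (by norm_num) _
            nlinarith
    have h3 : A ^ (2*r - 2*s) * B ^ (-(2*r)) ≤ A ^ (-(2*s)) + B ^ (-(2*s)) := by
      rcases le_total A B with h | h
      · have hb : B ^ (-(2*r)) ≤ A ^ (-(2*r)) :=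
          Real.rpow_le_rpow_of_nonpos A0 h (by linarith)
        calc A ^ (2*r - 2*s) * B ^ (-(2*r)) ≤ A ^ (2*r - 2*s) * A ^ (-(2*r)) := by
              have := Real.rpow_nonneg A0.le (2*r - 2*s); nlinarith
          _ = A ^ (-(2*s)) := by
              rw [← Real.rpow_add A0]; ring_nf
          _ ≤ A ^ (-(2*s)) + B ^ (-(2*s)) := by
              have := Real.rpow_nonneg B0.le (-(2*s)); linarith
      · have ha : A ^ (2*r - 2*s) ≤ B ^ (2*r - 2*s) :=
          Real.rpow_le_rpow_of_nonpos B0 h (by linarith)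
        calc A ^ (2*r - 2*s) * B ^ (-(2*r)) ≤ B ^ (2*r - 2*s) * B ^ (-(2*r)) := by
              have := Real.rpow_nonneg B0.le (-(2*r)); nlinarith
          _ = B ^ (-(2*s)) := by
              rw [← Real.rpow_add B0]; ring_nf
          _ ≤ A ^ (-(2*s)) + B ^ (-(2*s)) := by
              have := Real.rpow_nonneg A0.le (-(2*s)); linarith
    have e1 : A ^ (2*r) * A ^ (-(2*s)) = A ^ (2*r - 2*s) := by
      rw [← Real.rpow_add A0]; ring_nf
    have e2 : B ^ (2*r) * B ^ (-(2*r)) = 1 := by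
      rw [← Real.rpow_add B0, add_neg_cancel, Real.rpow_zero]
    have hpow2 : (2:ℝ) ^ (2*r+1) = 2 ^ (2*r) * 2 := by
      rw [Real.rpow_add (by norm_num), Real.rpow_one]
    have h2 : (0:ℝ) ≤ 2 ^ (2*r) := Real.rpow_nonneg (by norm_num) _
    have hAn : (0:ℝ) ≤ A ^ (-(2*s)) := Real.rpow_nonneg A0.le _
    have hBn : (0:ℝ) ≤ B ^ (-(2*s)) := Real.rpow_nonneg B0.le _
    have hAr : (0:ℝ) ≤ A ^ (-(2*s)) * B ^ (-(2*r)) := by positivity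
    calc H ^ (2*r) * A ^ (-(2*s)) * B ^ (-(2*r))
        ≤ (2 ^ (2*r) * (A ^ (2*r) + B ^ (2*r))) * (A ^ (-(2*s)) * B ^ (-(2*r))) := by
          rw [mul_assoc]
          exact mul_le_mul_of_nonneg_right h1 hAr
      _ = 2 ^ (2*r) * ((A ^ (2*r) * A ^ (-(2*s))) * B ^ (-(2*r))
            + (B ^ (2*r) * B ^ (-(2*r))) * A ^ (-(2*s))) := by ring
      _ = 2 ^ (2*r) * (A ^ (2*r - 2*s) * B ^ (-(2*r)) + A ^ (-(2*s))) := by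
          rw [e1, e2, one_mul]
      _ ≤ 2 ^ (2*r) * ((A ^ (-(2*s)) + B ^ (-(2*s))) + A ^ (-(2*s))) := by nlinarith
      _ ≤ 2 ^ (2*r+1) * (A ^ (-(2*s)) + B ^ (-(2*s))) := by rw [hpow2]; nlinarith
  · -- case `r < 0`
    have hmax : max (-r) 0 = -r := max_eq_left (by linarith)
    rw [hmax, abs_of_neg hr, sub_neg_eq_add]
    have hBr : B ^ (-(2*r)) ≤ (2 * (H * A)) ^ (-(2*r)) :=
      Real.rpow_le_rpow B0.le hB2 (by linarith)
    have e3 : (2 * (H * A)) ^ (-(2*r)) = 2 ^ (-(2*r)) * (H ^ (-(2*r)) * A ^ (-(2*r))) := by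
      rw [Real.mul_rpow (by norm_num) (by positivity), Real.mul_rpow H0.le A0.le]
    have e4 : H ^ (2*r) * H ^ (-(2*r)) = 1 := by
      rw [← Real.rpow_add H0, add_neg_cancel, Real.rpow_zero]
    have e5 : A ^ (-(2*s)) * A ^ (-(2*r)) = A ^ (-(2*(s+r))) := by
      rw [← Real.rpow_add A0]; ring_nf
    have hcoef : (2:ℝ) ^ (-(2*r)) ≤ 2 ^ (2*(-r)+1) :=
      Real.rpow_le_rpow_of_exponent_le (by norm_num) (by linarith)
    have hpos : (0:ℝ) ≤ A ^ (-(2*(s+r))) := Real.rpow_nonneg A0.le _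
    have hposB : (0:ℝ) ≤ B ^ (-(2*(s+r))) := Real.rpow_nonneg B0.le _
    calc H ^ (2*r) * A ^ (-(2*s)) * B ^ (-(2*r))
        ≤ H ^ (2*r) * A ^ (-(2*s)) * (2 * (H * A)) ^ (-(2*r)) := by
          have : (0:ℝ) ≤ H ^ (2*r) * A ^ (-(2*s)) := by positivity
          nlinarith
      _ = 2 ^ (-(2*r)) * ((H ^ (2*r) * H ^ (-(2*r))) * (A ^ (-(2*s)) * A ^ (-(2*r)))) := by
          rw [e3]; ring
      _ = 2 ^ (-(2*r)) * A ^ (-(2*(s+r))) := by rw [e4, e5, one_mul]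
      _ ≤ 2 ^ (2*(-r)+1) * (A ^ (-(2*(s+r))) + B ^ (-(2*(s+r)))) := by
          have h2 : (0:ℝ) ≤ 2 ^ (-(2*r)) := Real.rpow_nonneg (by norm_num) _
          nlinarith

/-- **Weighted kernel estimate** (Lemma 3.7 of the paper).  If `s ≥ r` and
`s > n/2 + max(−r,0)`, then there is `C < ∞` such that for every `η ∈ ℝⁿ`
`∫ ⟨η⟩^{2r} ⟨η−ξ⟩^{−2s} ⟨ξ⟩^{−2r} dξ ≤ C`; i.e. the kernel
`G(η,ξ) = ⟨η⟩^r / (⟨η−ξ⟩^s ⟨ξ⟩^r)` lies in `L^∞_η L²_ξ`. -/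
theorem fraction_estimate (n : ℕ) (hn : 1 ≤ n) (s r : ℝ)
    (hsr : r ≤ s) (hs : (n : ℝ) / 2 + max (-r) 0 < s) :
    ∃ C : ℝ, ∀ η : Euc n,
      (∫⁻ ξ : Euc n,
        ENNReal.ofReal (jb η ^ (2 * r) * jb (η - ξ) ^ (-(2 * s)) * jb ξ ^ (-(2 * r)))) ≤
        ENNReal.ofReal C := by
  set m : ℝ := s - max (-r) 0 with hm
  have hnm : (n : ℝ) < 2 * m := by
    have := hs; simp only [hm]; linarith
  have hm0 : 0 < m := by
    have h1 : (1:ℝ) ≤ (n:ℝ) := by exact_mod_cast hn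
    linarith
  -- measurability of the comparison kernel
  have hjbcont : Continuous fun ζ : Euc n => jb ζ := by
    unfold jb; fun_prop
  have hjb_ne : ∀ ζ : Euc n, jb ζ ≠ 0 := fun ζ => by
    have := one_le_jb ζ; linarith
  have hmeas : Measurable fun ζ : Euc n => ENNReal.ofReal (jb ζ ^ (-(2*m))) := by
    apply Measurable.ennreal_ofReal
    exact (hjbcont.rpow_const (fun ζ => Or.inl (hjb_ne ζ))).measurable
  -- finiteness of the comparison integral
  have I_fin : (∫⁻ ζ : Euc n, ENNReal.ofReal (jb ζ ^ (-(2*m)))) < ∞ := by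
    have key : ∀ ζ : Euc n, jb ζ ^ (-(2*m)) ≤ 2 ^ m * (1 + ‖ζ‖) ^ (-(2*m)) := by
      intro ζ
      have h := rpow_neg_one_add_norm_sq_le (r := 2*m) ζ (by linarith)
      have e : jb ζ ^ (-(2*m)) = ((1:ℝ) + ‖ζ‖ ^ 2) ^ (-(2*m)/2) := by
        rw [Real.rpow_div_two_eq_sqrt _ (by positivity)]; rfl
      have e2 : (2:ℝ) ^ (2*m/2) = 2 ^ m := by norm_num
      rw [e]
      calc ((1:ℝ) + ‖ζ‖ ^ 2) ^ (-(2*m)/2) ≤ 2 ^ (2*m/2) * (1 + ‖ζ‖) ^ (-(2*m)) := by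
            have : -(2*m)/2 = -(2*m)/2 := rfl
            exact_mod_cast h
        _ = 2 ^ m * (1 + ‖ζ‖) ^ (-(2*m)) := by rw [e2]
    calc (∫⁻ ζ : Euc n, ENNReal.ofReal (jb ζ ^ (-(2*m))))
        ≤ ∫⁻ ζ : Euc n, ENNReal.ofReal (2 ^ m * (1 + ‖ζ‖) ^ (-(2*m))) :=
          lintegral_mono fun ζ => ENNReal.ofReal_le_ofReal (key ζ)
      _ = ENNReal.ofReal (2 ^ m) * ∫⁻ ζ : Euc n, ENNReal.ofReal ((1 + ‖ζ‖) ^ (-(2*m))) := by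
          simp_rw [ENNReal.ofReal_mul (by positivity : (0:ℝ) ≤ 2 ^ m)]
          exact lintegral_const_mul' _ _ ENNReal.ofReal_ne_top
      _ < ∞ := by
          apply ENNReal.mul_lt_top ENNReal.ofReal_lt_top
          apply finite_integral_one_add_norm
          rw [finrank_euclideanSpace_fin]
          exact hnm
  -- the total bound
  set K : ℝ≥0∞ := ENNReal.ofReal (2 ^ (2*|r|+1)) *
    ((∫⁻ ζ : Euc n, ENNReal.ofReal (jb ζ ^ (-(2*m)))) +
      (∫⁻ ζ : Euc n, ENNReal.ofReal (jb ζ ^ (-(2*m))))) with hK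
  have hK_ne : K ≠ ∞ := by
    rw [hK]
    exact (ENNReal.mul_lt_top ENNReal.ofReal_lt_top (ENNReal.add_lt_top.2 ⟨I_fin, I_fin⟩)).ne
  refine ⟨K.toReal, fun η => ?_⟩
  rw [ENNReal.ofReal_toReal hK_ne]
  -- pointwise bound
  have point : ∀ ξ : Euc n,
      jb η ^ (2 * r) * jb (η - ξ) ^ (-(2 * s)) * jb ξ ^ (-(2 * r)) ≤
        2 ^ (2*|r|+1) * (jb (η - ξ) ^ (-(2*m)) + jb ξ ^ (-(2*m))) := by
    intro ξ
    set A := jb (η - ξ) with hAdef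
    set B := jb ξ with hBdef
    set H := jb η with hHdef
    have hA : 1 ≤ A := one_le_jb (η - ξ)
    have hB : 1 ≤ B := one_le_jb ξ
    have hH : 1 ≤ H := one_le_jb η
    have hAsq : A ^ 2 = 1 + ‖η - ξ‖ ^ 2 := jb_sq (η - ξ)
    have hBsq : B ^ 2 = 1 + ‖ξ‖ ^ 2 := jb_sq ξ
    have hHsq : H ^ 2 = 1 + ‖η‖ ^ 2 := jb_sq η
    have hnorm1 : ‖η‖ ≤ ‖η - ξ‖ + ‖ξ‖ := by
      calc ‖η‖ = ‖(η - ξ) + ξ‖ := by rw [sub_add_cancel]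
        _ ≤ ‖η - ξ‖ + ‖ξ‖ := norm_add_le _ _
    have hnorm2 : ‖ξ‖ ≤ ‖η‖ + ‖η - ξ‖ := by
      calc ‖ξ‖ = ‖η - (η - ξ)‖ := by rw [sub_sub_cancel]
        _ ≤ ‖η‖ + ‖η - ξ‖ := norm_sub_le _ _
    have hH2 : H ≤ 2 * max A B := by
      have hmA : A ^ 2 ≤ (max A B) ^ 2 :=
        pow_le_pow_left₀ (by positivity) (le_max_left A B) 2
      have hmB : B ^ 2 ≤ (max A B) ^ 2 :=
        pow_le_pow_left₀ (by positivity) (le_max_right A B) 2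
      have h : H ^ 2 ≤ (2 * max A B) ^ 2 := by
        nlinarith [hnorm1, norm_nonneg (η - ξ), norm_nonneg ξ, sq_nonneg (‖η - ξ‖ - ‖ξ‖)]
      have h2M : (0:ℝ) ≤ 2 * max A B := by
        have h0 : (0:ℝ) ≤ max A B := le_trans (by linarith) (le_max_left A B)
        linarith
      exact (pow_le_pow_iff_left₀ (by linarith) h2M two_ne_zero).1 h
    have hB2 : B ≤ 2 * (H * A) := by
      have h : B ^ 2 ≤ (2 * (H * A)) ^ 2 := by
        nlinarith [hnorm2, norm_nonneg η, norm_nonneg (η - ξ), sq_nonneg (‖η‖ * ‖η - ξ‖),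
          sq_nonneg (‖η‖ - ‖η - ξ‖)]
      have hHA : (0:ℝ) ≤ 2 * (H * A) := by nlinarith
      exact (pow_le_pow_iff_left₀ (by linarith) hHA two_ne_zero).1 h
    have hk := key_ineq s r A B H hA hB hH hsr hH2 hB2
    rw [← hm] at hk
    exact hk
  calc (∫⁻ ξ : Euc n,
        ENNReal.ofReal (jb η ^ (2 * r) * jb (η - ξ) ^ (-(2 * s)) * jb ξ ^ (-(2 * r))))
      ≤ ∫⁻ ξ : Euc n, ENNReal.ofReal
          (2 ^ (2*|r|+1) * (jb (η - ξ) ^ (-(2*m)) + jb ξ ^ (-(2*m)))) :=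
        lintegral_mono fun ξ => ENNReal.ofReal_le_ofReal (point ξ)
    _ = ENNReal.ofReal (2 ^ (2*|r|+1)) *
        ∫⁻ ξ : Euc n, (ENNReal.ofReal (jb (η - ξ) ^ (-(2*m)))
          + ENNReal.ofReal (jb ξ ^ (-(2*m)))) := by
        have hconv : ∀ ξ : Euc n, ENNReal.ofReal
            (2 ^ (2*|r|+1) * (jb (η - ξ) ^ (-(2*m)) + jb ξ ^ (-(2*m)))) =
            ENNReal.ofReal (2 ^ (2*|r|+1)) *
              (ENNReal.ofReal (jb (η - ξ) ^ (-(2*m)))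
                + ENNReal.ofReal (jb ξ ^ (-(2*m)))) := by
          intro ξ
          rw [ENNReal.ofReal_mul (by positivity),
            ENNReal.ofReal_add (Real.rpow_nonneg (by linarith [one_le_jb (η - ξ)]) _)
              (Real.rpow_nonneg (by linarith [one_le_jb ξ]) _)]
        simp_rw [hconv]
        exact lintegral_const_mul' _ _ ENNReal.ofReal_ne_top
    _ = K := by
        rw [hK]
        congr 1
        have hmeas' : Measurable fun ξ : Euc n => ENNReal.ofReal (jb (η - ξ) ^ (-(2*m))) :=
          hmeas.comp (measurable_const.sub measurable_id)
        rw [lintegral_add_left' hmeas'.aemeasurable]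
        congr 1
        exact (Measure.measurePreserving_sub_left volume η).lintegral_comp hmeas
end
end

section
/- Let d ≥ 1 and let g, g' be symmetric bilinear forms on ℝ^{1+d}, each of signature (1,d); that is, for each of g and g' there is a basis (e₀, e₁, …, e_d) of ℝ^{1+d} in which the form is diagonal with value 1 on e₀ and value −1 on e₁, …, e_d. Suppose that the zero sets of the associated quadratic forms coincide: { x ∈ ℝ^{1+d} : g(x,x) = 0 } = { x ∈ ℝ^{1+d} : g'(x,x) = 0 }. Then there exists μ ∈ ℝ, μ ≠ 0, such that g = μ · g'. -/
noncomputable section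

/-- A symmetric bilinear form on `ℝ^{1+d}` of Lorentzian signature `(1,d)`: there is a
basis in which the form is diagonal with value `1` on the first basis vector and `-1` on
the remaining ones. -/
def IsLorentzSig (d : ℕ)
    (g : (Fin (d + 1) → ℝ) →ₗ[ℝ] (Fin (d + 1) → ℝ) →ₗ[ℝ] ℝ) : Prop :=
  (∀ x y, g x y = g y x) ∧
  ∃ b : Module.Basis (Fin (d + 1)) ℝ (Fin (d + 1) → ℝ),
    (∀ i j, i ≠ j → g (b i) (b j) = 0) ∧
    g (b 0) (b 0) = 1 ∧
    ∀ i, i ≠ 0 → g (b i) (b i) = -1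

/-- **Bilinear forms with the same light cone are proportional** (Lemma 8.6 of the
paper).  Let `d ≥ 1` and let `g, g'` be symmetric bilinear forms on `ℝ^{1+d}`, each of
signature `(1,d)`, whose associated quadratic forms have the same zero set.  Then
`g = μ g'` for some `μ ∈ ℝ`, `μ ≠ 0`. -/
theorem same_light_cone_implies_proportional (d : ℕ) (hd : 1 ≤ d)
    (g g' : (Fin (d + 1) → ℝ) →ₗ[ℝ] (Fin (d + 1) → ℝ) →ₗ[ℝ] ℝ)
    (hg : IsLorentzSig d g) (hg' : IsLorentzSig d g')
    (hzero : {x | g x x = 0} = {x | g' x x = 0}) :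
    ∃ μ : ℝ, μ ≠ 0 ∧ g = μ • g' := by
  obtain ⟨gsym, b, horth, h00, hii⟩ := hg
  obtain ⟨gsym', b', horth', h00', hii'⟩ := hg'
  have null : ∀ x, g x x = 0 → g' x x = 0 := fun x h => (Set.ext_iff.mp hzero x).mp h
  set c := g' (b 0) (b 0) with hc
  -- cross terms with 0 vanish and diagonal terms equal -c
  have key : ∀ i, i ≠ (0 : Fin (d + 1)) →
      g' (b 0) (b i) = 0 ∧ g' (b i) (b i) = -c := by
    intro i hi
    have hp : g' (b 0 + b i) (b 0 + b i) = 0 := by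
      apply null
      simp only [map_add, LinearMap.add_apply]
      rw [h00, hii i hi, horth 0 i (Ne.symm hi), horth i 0 hi]; ring
    have hm : g' (b 0 - b i) (b 0 - b i) = 0 := by
      apply null
      simp only [map_sub, LinearMap.sub_apply]
      rw [h00, hii i hi, horth 0 i (Ne.symm hi), horth i 0 hi]; ring
    simp only [map_add, map_sub, LinearMap.add_apply, LinearMap.sub_apply] at hp hm
    have hsym := gsym' (b 0) (b i)
    constructor <;> [linarith; linarith]
  -- off-diagonal terms among spatial indices vanish
  have key2 : ∀ i j, i ≠ (0 : Fin (d + 1)) → j ≠ (0 : Fin (d + 1)) → i ≠ j →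
      g' (b i) (b j) = 0 := by
    intro i j hi hj hij
    have hs : Real.sqrt 2 * Real.sqrt 2 = 2 := Real.mul_self_sqrt (by norm_num)
    have hv : g' (Real.sqrt 2 • b 0 + b i + b j) (Real.sqrt 2 • b 0 + b i + b j) = 0 := by
      apply null
      simp only [map_add, map_smul, LinearMap.add_apply, LinearMap.smul_apply,
        smul_eq_mul]
      rw [h00, hii i hi, hii j hj, horth 0 i (Ne.symm hi), horth i 0 hi,
        horth 0 j (Ne.symm hj), horth j 0 hj, horth i j hij, horth j i (Ne.symm hij)]
      ring_nf
      nlinarith [hs]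
    simp only [map_add, map_smul, LinearMap.add_apply, LinearMap.smul_apply,
      smul_eq_mul] at hv
    rw [(key i hi).1, (key j hj).1, (key i hi).2, (key j hj).2,
      gsym' (b i) (b 0), (key i hi).1, gsym' (b j) (b 0), (key j hj).1,
      gsym' (b j) (b i), ← hc] at hv
    linear_combination hv / 2 - c * hs / 2
  -- g' = c • g on basis, hence everywhere
  have hgg : g' = c • g := by
    apply b.ext; intro i
    apply b.ext; intro j
    simp only [LinearMap.smul_apply, smul_eq_mul]
    by_cases hij : i = j
    · subst hij
      by_cases hi : i = 0
      · subst hi; rw [h00]; ring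
      · rw [(key i hi).2, hii i hi]; ring
    · rw [horth i j hij, mul_zero]
      by_cases hi : i = 0
      · subst hi
        have hj : j ≠ 0 := fun h => hij h.symm
        exact (key j hj).1
      · by_cases hj : j = 0
        · subst hj; rw [gsym' (b i) (b 0)]; exact (key i hi).1
        · exact key2 i j hi hj hij
  have hc0 : c ≠ 0 := by
    intro h
    have : g' (b' 0) (b' 0) = 0 := by
      rw [hgg, h]; simp
    rw [h00'] at this; norm_num at this
  refine ⟨c⁻¹, inv_ne_zero hc0, ?_⟩
  rw [hgg, smul_smul, inv_mul_cancel₀ hc0, one_smul]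
end
end

section
/- Let n ≥ 2. Let Y, ζ ∈ ℝ^{n−1}, σ ∈ ℝ and τ ∈ ℝ with τ ≥ 0, (ζ,σ) ≠ (0,0) and (Y·ζ − σ)² = ‖ζ‖². Then the following are equivalent: (a) 2(Y·ζ−σ)Y − 2ζ = 0 and 2(Y·ζ−σ)τ = 0 and there exists c ∈ ℝ with −2(Y·ζ−σ)ζ = c·ζ and c·σ = 0; (b) τ = 0, σ = 0, ζ ≠ 0, and Y = ζ/‖ζ‖ or Y = −ζ/‖ζ‖. -/
open scoped RealInnerProductSpace

noncomputable section

/-- **Radial points of the static de Sitter wave operator** (Lemma 7.2 of the paper).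
In coordinates `(Y, τ) ∈ ℝ^{n−1} × [0,∞)` near future infinity, with b-covectors
`ζ dY + σ dτ/τ`, the b-principal symbol of the wave operator is
`p = (Y·ζ − σ)² − ‖ζ‖²` and its Hamilton vector field has `∂_Y`-component
`2(Y·ζ−σ)Y − 2ζ`, `∂_τ`-component `2(Y·ζ−σ)τ` (up to sign) and fiber components
`(−2(Y·ζ−σ)ζ, 0)`.  For a characteristic point (`p = 0`, `(ζ,σ) ≠ 0`, `τ ≥ 0`), being a
radial point — i.e. the base components of `H_p` vanish and the fiber components are a
multiple `c` of the fiber dilation generator `(ζ, σ)` — is equivalent to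
`τ = 0`, `σ = 0`, `ζ ≠ 0` and `Y = ±ζ/‖ζ‖`. -/
theorem deSitter_radial_points (n : ℕ) (hn : 2 ≤ n)
    (Y ζ : EuclideanSpace ℝ (Fin (n - 1))) (σ τ : ℝ)
    (hτ : 0 ≤ τ) (hne : ¬(ζ = 0 ∧ σ = 0))
    (hchar : (⟪Y, ζ⟫ - σ) ^ 2 = ‖ζ‖ ^ 2) :
    ((2 * (⟪Y, ζ⟫ - σ)) • Y - (2 : ℝ) • ζ = 0 ∧
     2 * (⟪Y, ζ⟫ - σ) * τ = 0 ∧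
     ∃ c : ℝ, (-(2 * (⟪Y, ζ⟫ - σ))) • ζ = c • ζ ∧ c * σ = 0) ↔
    (τ = 0 ∧ σ = 0 ∧ ζ ≠ 0 ∧ (Y = ‖ζ‖⁻¹ • ζ ∨ Y = -(‖ζ‖⁻¹ • ζ))) := by
  set k : ℝ := ⟪Y, ζ⟫ - σ with hk
  constructor
  · rintro ⟨h1, h2, c, hc1, hc2⟩
    have hζ : ζ ≠ 0 := by
      intro h
      subst h
      simp only [inner_zero_right, norm_zero] at hk hchar
      have hσ : σ = 0 := by nlinarith [sq_nonneg σ]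
      exact hne ⟨rfl, hσ⟩
    have hknz : k ≠ 0 := by
      intro h
      rw [h] at hchar
      have : ‖ζ‖ = 0 := by nlinarith [norm_nonneg ζ]
      exact hζ (norm_eq_zero.mp this)
    have hc : -(2 * k) = c := smul_left_injective ℝ hζ hc1
    have hσ : σ = 0 := by
      rcases mul_eq_zero.mp hc2 with h | h
      · exfalso; apply hknz; rw [← hc] at h; linarith
      · exact h
    have hτ0 : τ = 0 := by
      rcases mul_eq_zero.mp h2 with h | h
      · exact absurd (by linarith : k = 0) hknz
      · exact h
    have hY : Y = k⁻¹ • ζ := by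
      have h1' : (2 * k) • Y = (2 : ℝ) • ζ := by
        have := sub_eq_zero.mp h1; exact this
      have h2k : (2 : ℝ) * k ≠ 0 := mul_ne_zero two_ne_zero hknz
      have : Y = (2 * k)⁻¹ • ((2 : ℝ) • ζ) := by
        rw [← h1', smul_smul, inv_mul_cancel₀ h2k, one_smul]
      rw [this, smul_smul]
      congr 1
      field_simp
    have hik : ⟪Y, ζ⟫ = k := by rw [hk, hσ, sub_zero]
    have hkval : k = ‖ζ‖ ∨ k = -‖ζ‖ := by
      have : k * k = ‖ζ‖ * ‖ζ‖ := by nlinarith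
      exact mul_self_eq_mul_self_iff.mp this
    refine ⟨hτ0, hσ, hζ, ?_⟩
    rcases hkval with h | h
    · left; rw [hY, h]
    · right; rw [hY, h, ← neg_smul, ← neg_inv]
  · rintro ⟨hτ0, hσ0, hζ, hY | hY⟩
    · have hnrm : ‖ζ‖ ≠ 0 := norm_ne_zero_iff.mpr hζ
      have hkv : k = ‖ζ‖ := by
        rw [hk, hσ0, sub_zero, hY, real_inner_smul_left, real_inner_self_eq_norm_sq]
        field_simp
      refine ⟨?_, by rw [hτ0, mul_zero], ⟨-(2 * k), rfl, by rw [hσ0, mul_zero]⟩⟩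
      rw [hkv, hY, smul_smul]
      have : 2 * ‖ζ‖ * ‖ζ‖⁻¹ = (2 : ℝ) := by field_simp
      rw [this, sub_self]
    · have hnrm : ‖ζ‖ ≠ 0 := norm_ne_zero_iff.mpr hζ
      have hkv : k = -‖ζ‖ := by
        rw [hk, hσ0, sub_zero, hY, inner_neg_left, real_inner_smul_left,
          real_inner_self_eq_norm_sq]
        field_simp
      refine ⟨?_, by rw [hτ0, mul_zero], ⟨-(2 * k), rfl, by rw [hσ0, mul_zero]⟩⟩
      rw [hkv, hY, smul_neg, smul_smul]
      have : 2 * -‖ζ‖ * ‖ζ‖⁻¹ = (-2 : ℝ) := by field_simp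
      rw [this]
      simp
end
end

section
/- Let m ∈ ℝ and let a : ℂ → ℂ be entire. Assume that for every N ∈ ℕ and every k ∈ ℕ there is a constant C_{N,k} such that |a^{(k)}(λ + iμ)| ≤ C_{N,k} (1 + |λ|)^{m − k} for all λ ∈ ℝ and all μ ∈ [−N, N]. Fix k ∈ ℕ with k > m + 1, so that λ ↦ a^{(k)}(λ + iμ) is absolutely integrable on ℝ for each μ. Then: (i) for every μ ∈ ℝ and every x ∈ ℝ, ∫_ℝ e^{ixλ} a^{(k)}(λ) dλ = e^{−xμ} ∫_ℝ e^{ixλ} a^{(k)}(λ + iμ) dλ; (ii) consequently, for every μ ≥ 0, sup_{x ∈ ℝ} e^{μ|x|} | ∫_ℝ e^{ixλ} a^{(k)}(λ) dλ | < ∞. -/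
noncomputable section

open MeasureTheory Filter Complex intervalIntegral Set Topology

namespace EntireSymbolAux

lemma rpow_integrable {s : ℝ} (hs : s < -1) :
    Integrable (fun l : ℝ => (1 + |l|) ^ s) := by
  have h : (Module.finrank ℝ ℝ : ℝ) < -s := by
    simp [Module.finrank_self]; linarith
  have := integrable_one_add_norm (E := ℝ) (μ := volume) h
  simpa [Real.norm_eq_abs, neg_neg] using this

lemma integrable_aux {m : ℝ} (hm : m < -1) {f : ℂ → ℂ} (hf : Continuous f) {C : ℝ}
    (μ : ℝ) (hC : ∀ l : ℝ, ‖f ((l : ℂ) + (μ : ℂ) * Complex.I)‖ ≤ C * (1 + |l|) ^ m) (x : ℝ) :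
    Integrable (fun l : ℝ =>
      Complex.exp (Complex.I * (x : ℂ) * (l : ℂ)) * f ((l : ℂ) + (μ : ℂ) * Complex.I)) := by
  have hcont : Continuous (fun l : ℝ =>
      Complex.exp (Complex.I * (x : ℂ) * (l : ℂ)) * f ((l : ℂ) + (μ : ℂ) * Complex.I)) := by
    fun_prop
  refine ((rpow_integrable hm).const_mul C).mono' hcont.aestronglyMeasurable
    (Filter.Eventually.of_forall fun l => ?_)
  have h1 : ‖Complex.exp (Complex.I * (x : ℂ) * (l : ℂ))‖ = 1 := by
    rw [Complex.norm_exp]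
    simp
  rw [norm_mul, h1, one_mul]
  exact hC l

end EntireSymbolAux

/-- **Contour shift and super-exponential decay** (the decay direction of Lemma 2.2 of
the paper, in integral form).  Let `a` be entire with, for every `N` and `j`,
`|a^{(j)}(λ+iμ)| ≤ C_{N,j} (1+|λ|)^{m−j}` for `|μ| ≤ N`, and fix `k ∈ ℕ` with
`k > m + 1`.  Then (i) for all `μ, x ∈ ℝ`,
`∫ e^{ixλ} a^{(k)}(λ) dλ = e^{−xμ} ∫ e^{ixλ} a^{(k)}(λ+iμ) dλ`, and consequently
(ii) for every `μ ≥ 0`, `sup_x e^{μ|x|} |∫ e^{ixλ} a^{(k)}(λ) dλ| < ∞`. -/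
theorem entire_symbol_contour_shift (m : ℝ) (a : ℂ → ℂ) (ha : Differentiable ℂ a)
    (hbd : ∀ N j : ℕ, ∃ C : ℝ, ∀ l μ : ℝ, |μ| ≤ (N : ℝ) →
      ‖iteratedDeriv j a ((l : ℂ) + (μ : ℂ) * Complex.I)‖ ≤ C * (1 + |l|) ^ (m - (j : ℝ)))
    (k : ℕ) (hk : m + 1 < (k : ℝ)) :
    (∀ μ x : ℝ,
      (∫ l : ℝ, Complex.exp (Complex.I * (x : ℂ) * (l : ℂ)) * iteratedDeriv k a (l : ℂ)) =
        (Real.exp (-(x * μ)) : ℂ) *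
          ∫ l : ℝ, Complex.exp (Complex.I * (x : ℂ) * (l : ℂ)) *
            iteratedDeriv k a ((l : ℂ) + (μ : ℂ) * Complex.I)) ∧
    (∀ μ : ℝ, 0 ≤ μ → ∃ C : ℝ, ∀ x : ℝ,
      Real.exp (μ * |x|) *
          ‖∫ l : ℝ, Complex.exp (Complex.I * (x : ℂ) * (l : ℂ)) * iteratedDeriv k a (l : ℂ)‖ ≤
        C) := by
  classical
  set f : ℂ → ℂ := iteratedDeriv k a with hfdef
  have hm : m - (k : ℝ) < -1 := by linarith
  have hsmooth : ContDiff ℂ ⊤ a := ha.contDiff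
  have hf : Differentiable ℂ f := hsmooth.differentiable_iteratedDeriv k
    (by simp)
  -- part (i)
  have part1 : ∀ μ x : ℝ,
      (∫ l : ℝ, Complex.exp (Complex.I * (x : ℂ) * (l : ℂ)) * f (l : ℂ)) =
        (Real.exp (-(x * μ)) : ℂ) *
          ∫ l : ℝ, Complex.exp (Complex.I * (x : ℂ) * (l : ℂ)) *
            f ((l : ℂ) + (μ : ℂ) * Complex.I) := by
    intro μ x
    obtain ⟨C, hC⟩ := hbd ⌈|μ|⌉₊ k
    have hμN : |μ| ≤ (⌈|μ|⌉₊ : ℝ) := Nat.le_ceil _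
    set F : ℂ → ℂ := fun z => Complex.exp (Complex.I * (x : ℂ) * z) * f z with hFdef
    have hFdiff : Differentiable ℂ F := by
      apply Differentiable.mul _ hf
      exact (Complex.differentiable_exp).comp ((differentiable_const _).mul differentiable_id)
    -- integrability on horizontal lines
    have hint : ∀ ν : ℝ, |ν| ≤ (⌈|μ|⌉₊ : ℝ) →
        Integrable (fun l : ℝ =>
          Complex.exp (Complex.I * (x : ℂ) * (l : ℂ)) * f ((l : ℂ) + (ν : ℂ) * Complex.I)) := by
      intro ν hν
      exact EntireSymbolAux.integrable_aux hm hf.continuous ν (fun l => hC l ν hν) x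
    have hI0 : Integrable (fun l : ℝ =>
        Complex.exp (Complex.I * (x : ℂ) * (l : ℂ)) * f (l : ℂ)) := by
      have := hint 0 (by simp)
      simpa using this
    have hIμ := hint μ hμN
    -- rectangle identity
    have rect : ∀ R : ℝ,
        (∫ l in -R..R, F (l : ℂ)) =
          (∫ l in -R..R, F ((l : ℂ) + (μ : ℂ) * Complex.I)) +
            (Complex.I • (∫ y in (0:ℝ)..μ, F ((-R : ℝ) + (y : ℂ) * Complex.I)) -
              Complex.I • (∫ y in (0:ℝ)..μ, F ((R : ℝ) + (y : ℂ) * Complex.I))) := by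
      intro R
      have h := Complex.integral_boundary_rect_eq_zero_of_differentiableOn F
        (-(R : ℂ)) ((R : ℂ) + (μ : ℂ) * Complex.I) hFdiff.differentiableOn
      simp only [Complex.add_re, Complex.neg_re, Complex.ofReal_re, Complex.mul_re,
        Complex.I_re, Complex.I_im, Complex.ofReal_im, Complex.add_im, Complex.neg_im,
        Complex.mul_im, mul_zero, mul_one, zero_mul, sub_zero, zero_add, add_zero, zero_sub,
        neg_zero, Complex.ofReal_zero, Complex.ofReal_neg] at h
      push_cast at h ⊢
      simp only [smul_eq_mul] at h ⊢
      linear_combination h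
    -- limit of side integrals
    have hside : ∀ σ : ℝ, |σ| = 1 →
        Tendsto (fun R : ℝ => ∫ y in (0:ℝ)..μ, F ((σ * R : ℝ) + (y : ℂ) * Complex.I))
          atTop (𝓝 0) := by
      intro σ hσ
      have hg : Tendsto (fun R : ℝ =>
          (Real.exp (|x| * |μ|) * C * (1 + R) ^ (m - (k:ℝ))) * |μ|) atTop (𝓝 0) := by
        have h1 : Tendsto (fun R : ℝ => (1 + R) ^ (m - (k:ℝ))) atTop (𝓝 0) := by
          have := (tendsto_rpow_neg_atTop (y := -(m - (k:ℝ))) (by linarith)).comp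
            (tendsto_atTop_add_const_left atTop 1 tendsto_id)
          simpa [Function.comp_def] using this
        have := (h1.const_mul (Real.exp (|x| * |μ|) * C)).mul_const |μ|
        simpa [mul_comm, mul_assoc, mul_left_comm] using this
      have hbound : ∀ᶠ R : ℝ in atTop,
          ‖∫ y in (0:ℝ)..μ, F (((σ * R : ℝ) : ℂ) + (y : ℂ) * Complex.I)‖ ≤
            (Real.exp (|x| * |μ|) * C * (1 + R) ^ (m - (k:ℝ))) * |μ| := by
        filter_upwards [eventually_ge_atTop (0:ℝ)] with R hR
        have hμ0 : (Real.exp (|x| * |μ|) * C * (1 + R) ^ (m - (k:ℝ))) * |μ| =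
            (Real.exp (|x| * |μ|) * C * (1 + R) ^ (m - (k:ℝ))) * |μ - 0| := by simp
        rw [hμ0]
        refine intervalIntegral.norm_integral_le_of_norm_le_const fun y hy => ?_
        have hyμ : |y| ≤ |μ| := by
          rcases le_or_gt 0 μ with h | h
          · rw [Set.uIoc_of_le h] at hy
            rw [_root_.abs_of_pos hy.1, _root_.abs_of_nonneg h]; exact hy.2
          · rw [Set.uIoc_of_ge h.le] at hy
            rw [_root_.abs_of_nonpos hy.2, _root_.abs_of_neg h]; linarith [hy.1]
        have hyN : |y| ≤ (⌈|μ|⌉₊ : ℝ) := hyμ.trans hμN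
        have hnorm1 : ‖Complex.exp (Complex.I * (x : ℂ) * ((σ * R : ℝ) + (y : ℂ) * Complex.I))‖
            ≤ Real.exp (|x| * |μ|) := by
          rw [Complex.norm_exp]
          apply Real.exp_le_exp.2
          have : (Complex.I * (x : ℂ) * ((σ * R : ℝ) + (y : ℂ) * Complex.I)).re = -(x * y) := by
            simp [Complex.mul_re, Complex.mul_im]
          rw [this]
          calc -(x * y) ≤ |x * y| := neg_le_abs _
            _ = |x| * |y| := abs_mul x y
            _ ≤ |x| * |μ| := by
                exact mul_le_mul_of_nonneg_left hyμ (abs_nonneg x)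
        have hnorm2 : ‖f ((σ * R : ℝ) + (y : ℂ) * Complex.I)‖ ≤ C * (1 + R) ^ (m - (k:ℝ)) := by
          have := hC (σ * R) y hyN
          rwa [abs_mul, hσ, one_mul, _root_.abs_of_nonneg hR] at this
        calc ‖F ((σ * R : ℝ) + (y : ℂ) * Complex.I)‖
            = ‖Complex.exp (Complex.I * (x : ℂ) * ((σ * R : ℝ) + (y : ℂ) * Complex.I))‖ *
              ‖f ((σ * R : ℝ) + (y : ℂ) * Complex.I)‖ := norm_mul _ _
          _ ≤ Real.exp (|x| * |μ|) * (C * (1 + R) ^ (m - (k:ℝ))) := by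
              apply mul_le_mul hnorm1 hnorm2 (norm_nonneg _)
              positivity
          _ = Real.exp (|x| * |μ|) * C * (1 + R) ^ (m - (k:ℝ)) := by ring
      exact squeeze_zero_norm' hbound hg
    have hsideP := hside 1 (by norm_num)
    have hsideN := hside (-1) (by norm_num)
    simp only [one_mul, neg_one_mul] at hsideP hsideN
    -- the shifted integrand
    have hFe : ∀ l : ℝ, F ((l : ℂ) + (μ : ℂ) * Complex.I) =
        (Real.exp (-(x * μ)) : ℂ) *
          (Complex.exp (Complex.I * (x : ℂ) * (l : ℂ)) * f ((l : ℂ) + (μ : ℂ) * Complex.I)) := by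
      intro l
      have harg : Complex.I * (x : ℂ) * ((l : ℂ) + (μ : ℂ) * Complex.I) =
          Complex.I * (x : ℂ) * (l : ℂ) + ((-(x * μ) : ℝ) : ℂ) := by
        push_cast
        have : Complex.I * Complex.I = -1 := Complex.I_mul_I
        ring_nf
        rw [Complex.I_sq]
        ring
      simp only [hFdef]
      rw [harg, Complex.exp_add, ← Complex.ofReal_exp]
      ring
    have hIμ' : Integrable (fun l : ℝ => F ((l : ℂ) + (μ : ℂ) * Complex.I)) := by
      refine (hIμ.const_mul ((Real.exp (-(x * μ)) : ℂ))).congr ?_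
      exact Filter.Eventually.of_forall fun l => (hFe l).symm
    -- tendsto statements
    have hT0 : Tendsto (fun R : ℝ => ∫ l in -R..R, F (l : ℂ)) atTop
        (𝓝 (∫ l : ℝ, Complex.exp (Complex.I * (x : ℂ) * (l : ℂ)) * f (l : ℂ))) :=
      intervalIntegral_tendsto_integral hI0 tendsto_neg_atTop_atBot tendsto_id
    have hTμ : Tendsto (fun R : ℝ => ∫ l in -R..R, F ((l : ℂ) + (μ : ℂ) * Complex.I)) atTop
        (𝓝 (∫ l : ℝ, F ((l : ℂ) + (μ : ℂ) * Complex.I))) :=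
      intervalIntegral_tendsto_integral hIμ' tendsto_neg_atTop_atBot tendsto_id
    have hTside : Tendsto (fun R : ℝ =>
        Complex.I • (∫ y in (0:ℝ)..μ, F ((-R : ℝ) + (y : ℂ) * Complex.I)) -
          Complex.I • (∫ y in (0:ℝ)..μ, F ((R : ℝ) + (y : ℂ) * Complex.I))) atTop (𝓝 0) := by
      have h1 := hsideN.const_smul (Complex.I)
      have h2 := hsideP.const_smul (Complex.I)
      have := h1.sub h2
      simpa using this
    have hTall : Tendsto (fun R : ℝ => ∫ l in -R..R, F (l : ℂ)) atTop
        (𝓝 ((∫ l : ℝ, F ((l : ℂ) + (μ : ℂ) * Complex.I)) + 0)) := by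
      refine Tendsto.congr (fun R => (rect R).symm) (hTμ.add hTside)
    have hval := tendsto_nhds_unique hT0 hTall
    rw [hval, add_zero]
    have : (∫ l : ℝ, F ((l : ℂ) + (μ : ℂ) * Complex.I)) =
        (Real.exp (-(x * μ)) : ℂ) *
          ∫ l : ℝ, Complex.exp (Complex.I * (x : ℂ) * (l : ℂ)) *
            f ((l : ℂ) + (μ : ℂ) * Complex.I) := by
      simp_rw [hFe]
      exact MeasureTheory.integral_const_mul _ _
    exact this
  refine ⟨part1, ?_⟩
  -- part (ii)
  intro μ hμ
  set M₁ : ℝ := ∫ l : ℝ, ‖f ((l : ℂ) + (μ : ℂ) * Complex.I)‖ with hM₁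
  set M₂ : ℝ := ∫ l : ℝ, ‖f ((l : ℂ) + ((-μ : ℝ) : ℂ) * Complex.I)‖ with hM₂
  refine ⟨max M₁ M₂, fun x => ?_⟩
  have hnorm : ∀ ν : ℝ, ‖∫ l : ℝ, Complex.exp (Complex.I * (x : ℂ) * (l : ℂ)) *
      f ((l : ℂ) + (ν : ℂ) * Complex.I)‖ ≤
        ∫ l : ℝ, ‖f ((l : ℂ) + (ν : ℂ) * Complex.I)‖ := by
    intro ν
    refine (MeasureTheory.norm_integral_le_integral_norm _).trans_eq ?_
    congr 1
    funext l
    rw [norm_mul, Complex.norm_exp]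
    simp
  rcases le_or_gt 0 x with hx | hx
  · have h := part1 μ x
    rw [h, norm_mul]
    rw [_root_.abs_of_nonneg hx]
    have : ‖((Real.exp (-(x * μ)) : ℝ) : ℂ)‖ = Real.exp (-(x * μ)) := by
      rw [Complex.norm_real, Real.norm_eq_abs, _root_.abs_of_pos (Real.exp_pos _)]
    rw [this]
    have hb := hnorm μ
    calc Real.exp (μ * x) * (Real.exp (-(x * μ)) *
          ‖∫ l : ℝ, Complex.exp (Complex.I * (x : ℂ) * (l : ℂ)) *
            f ((l : ℂ) + (μ : ℂ) * Complex.I)‖)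
        = ‖∫ l : ℝ, Complex.exp (Complex.I * (x : ℂ) * (l : ℂ)) *
            f ((l : ℂ) + (μ : ℂ) * Complex.I)‖ := by
          rw [← mul_assoc, ← Real.exp_add,
            show μ * x + -(x * μ) = 0 from by ring, Real.exp_zero, one_mul]
      _ ≤ M₁ := hb
      _ ≤ max M₁ M₂ := le_max_left _ _
  · have h := part1 (-μ) x
    rw [h, norm_mul]
    rw [_root_.abs_of_neg hx]
    have : ‖((Real.exp (-(x * -μ)) : ℝ) : ℂ)‖ = Real.exp (-(x * -μ)) := by
      rw [Complex.norm_real, Real.norm_eq_abs, _root_.abs_of_pos (Real.exp_pos _)]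
    rw [this]
    have hb := hnorm (-μ)
    calc Real.exp (μ * -x) * (Real.exp (-(x * -μ)) *
          ‖∫ l : ℝ, Complex.exp (Complex.I * (x : ℂ) * (l : ℂ)) *
            f ((l : ℂ) + ((-μ : ℝ) : ℂ) * Complex.I)‖)
        = ‖∫ l : ℝ, Complex.exp (Complex.I * (x : ℂ) * (l : ℂ)) *
            f ((l : ℂ) + ((-μ : ℝ) : ℂ) * Complex.I)‖ := by
          rw [← mul_assoc, ← Real.exp_add,
            show μ * -x + -(x * -μ) = 0 from by ring, Real.exp_zero, one_mul]
      _ ≤ M₂ := hb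
      _ ≤ max M₁ M₂ := le_max_right _ _
end
end

section
/- Let n ≥ 1 and s > n/2 + 1. Let K, K₀ ⊆ ℝⁿ be measurable sets and c > 0 be such that ‖ζ − ξ‖ ≥ c‖ζ‖ whenever ζ ∈ K₀ and ξ ∉ K. Then there is a constant C = C(n, s, c) with the following property: for all measurable f, g : ℝⁿ → ℂ and v₀ ∈ L²(ℝⁿ) with ⟨·⟩^s f ∈ L²(ℝⁿ) and |g(ξ)| ≤ ( 1_K(ξ) ⟨ξ⟩^{−s} + 1_{K^c}(ξ) ⟨ξ⟩^{−(s−1)} ) v₀(ξ) for almost every ξ, the convolution h(ζ) := ∫_{ℝⁿ} f(ζ−ξ) g(ξ) dξ converges absolutely for almost every ζ, and ‖ 1_{K₀} · ⟨·⟩^s · h ‖_{L²} ≤ C ‖⟨·⟩^s f‖_{L²} ‖v₀‖_{L²}. -/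
open MeasureTheory
open scoped ENNReal

noncomputable section

namespace MicrolocalAux

variable {n : ℕ}

lemma one_le_jb (x : Euc n) : 1 ≤ jb x := by
  have h : (1:ℝ) ≤ 1 + ‖x‖ ^ 2 := by nlinarith [sq_nonneg ‖x‖]
  calc (1:ℝ) = Real.sqrt 1 := by simp
    _ ≤ Real.sqrt (1 + ‖x‖ ^ 2) := Real.sqrt_le_sqrt h

lemma jb_pos (x : Euc n) : 0 < jb x := lt_of_lt_of_le one_pos (one_le_jb x)

lemma jb_nonneg (x : Euc n) : 0 ≤ jb x := (jb_pos x).le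

lemma jb_sq (x : Euc n) : jb x ^ 2 = 1 + ‖x‖ ^ 2 := Real.sq_sqrt (by positivity)

lemma jb_rpow_pos (x : Euc n) (t : ℝ) : 0 < jb x ^ t := Real.rpow_pos_of_pos (jb_pos x) t

lemma measurable_jb : Measurable (jb : Euc n → ℝ) :=
  (Real.continuous_sqrt.comp (continuous_const.add (continuous_norm.pow 2))).measurable

lemma jb_add_le (x y : Euc n) : jb (x + y) ≤ 2 * max (jb x) (jb y) := by
  have h1 : ‖x + y‖ ≤ ‖x‖ + ‖y‖ := norm_add_le x y
  have hx : jb x ≤ max (jb x) (jb y) := le_max_left _ _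
  have hy : jb y ≤ max (jb x) (jb y) := le_max_right _ _
  have h : 1 + ‖x + y‖ ^ 2 ≤ (2 * max (jb x) (jb y)) ^ 2 := by
    nlinarith [jb_sq x, jb_sq y, norm_nonneg x, norm_nonneg y, norm_nonneg (x + y),
      jb_nonneg x, jb_nonneg y, mul_self_le_mul_self (jb_nonneg x) hx,
      mul_self_le_mul_self (jb_nonneg y) hy,
      mul_self_le_mul_self (norm_nonneg (x + y)) h1]
  calc jb (x + y) ≤ Real.sqrt ((2 * max (jb x) (jb y)) ^ 2) := Real.sqrt_le_sqrt h
    _ = 2 * max (jb x) (jb y) := Real.sqrt_sq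
        (mul_nonneg (by norm_num) (le_trans (jb_nonneg x) (le_max_left _ _)))

lemma jb_rpow_add_le {s : ℝ} (hs : 0 ≤ s) (x y : Euc n) :
    jb (x + y) ^ s ≤ 2 ^ s * (jb x ^ s + jb y ^ s) := by
  have h1 : jb (x + y) ^ s ≤ (2 * max (jb x) (jb y)) ^ s :=
    Real.rpow_le_rpow (jb_nonneg _) (jb_add_le x y) hs
  have h2 : (2 * max (jb x) (jb y)) ^ s = 2 ^ s * max (jb x) (jb y) ^ s :=
    Real.mul_rpow (by norm_num) (le_trans (jb_nonneg x) (le_max_left _ _))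
  have h3 : max (jb x) (jb y) ^ s ≤ jb x ^ s + jb y ^ s := by
    rcases max_cases (jb x) (jb y) with ⟨h, _⟩ | ⟨h, _⟩ <;> rw [h]
    · nlinarith [(jb_rpow_pos y s).le]
    · nlinarith [(jb_rpow_pos x s).le]
  have h4 : (0:ℝ) < 2 ^ s := Real.rpow_pos_of_pos two_pos s
  calc jb (x + y) ^ s ≤ 2 ^ s * max (jb x) (jb y) ^ s := by rw [← h2]; exact h1
    _ ≤ 2 ^ s * (jb x ^ s + jb y ^ s) := by nlinarith

lemma jb_le_of_cone {c : ℝ} (hc : 0 < c) {ζ ξ : Euc n} (h : c * ‖ζ‖ ≤ ‖ζ - ξ‖) :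
    jb ζ ≤ max 1 c⁻¹ * jb (ζ - ξ) := by
  set m := max 1 c⁻¹ with hm
  have hm1 : 1 ≤ m := le_max_left _ _
  have hmc : c⁻¹ ≤ m := le_max_right _ _
  have hnorm : ‖ζ‖ ≤ m * ‖ζ - ξ‖ := by
    have h1 : ‖ζ‖ ≤ c⁻¹ * ‖ζ - ξ‖ := by rw [le_inv_mul_iff₀ hc]; exact h
    nlinarith [norm_nonneg (ζ - ξ)]
  have h2 : 1 + ‖ζ‖ ^ 2 ≤ (m * jb (ζ - ξ)) ^ 2 := by
    nlinarith [jb_sq (ζ - ξ), norm_nonneg ζ, norm_nonneg (ζ - ξ), jb_nonneg (ζ - ξ),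
      mul_self_le_mul_self (norm_nonneg ζ) hnorm,
      mul_self_le_mul_self (by norm_num : (0:ℝ) ≤ 1) hm1]
  calc jb ζ ≤ Real.sqrt ((m * jb (ζ - ξ)) ^ 2) := Real.sqrt_le_sqrt h2
    _ = m * jb (ζ - ξ) := Real.sqrt_sq
        (mul_nonneg (le_trans zero_le_one hm1) (jb_nonneg _))

lemma ennreal_rpow_two (x : ℝ≥0∞) : x ^ (2:ℝ) = x * x := by
  rw [show (2:ℝ) = ((2:ℕ):ℝ) by norm_num, ENNReal.rpow_natCast, sq]

lemma jb_eq_rpow (x : Euc n) : jb x = ((1:ℝ) + ‖x‖ ^ 2) ^ (1/2:ℝ) := by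
  rw [jb, Real.sqrt_eq_rpow]

/-- Finiteness of `∫ ⟨ξ⟩^(-t)` for `t > n`. -/
lemma lintegral_jb_neg_lt_top {t : ℝ} (ht : (n : ℝ) < t) :
    ∫⁻ ξ : Euc n, ENNReal.ofReal (jb ξ ^ (-t)) < ⊤ := by
  have hint : Integrable (fun x : Euc n => ((1:ℝ) + ‖x‖ ^ 2) ^ (-t / 2)) := by
    apply integrable_rpow_neg_one_add_norm_sq (E := Euc n)
    rwa [finrank_euclideanSpace_fin]
  have heq : ∀ x : Euc n, jb x ^ (-t) = ((1:ℝ) + ‖x‖ ^ 2) ^ (-t / 2) := by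
    intro x
    rw [jb_eq_rpow, ← Real.rpow_mul (by positivity)]
    congr 1
    ring
  have h2 : (∫⁻ ξ : Euc n, ENNReal.ofReal (jb ξ ^ (-t)))
      = ∫⁻ ξ : Euc n, (‖((1:ℝ) + ‖ξ‖ ^ 2) ^ (-t / 2)‖₊ : ℝ≥0∞) := by
    refine lintegral_congr fun ξ => ?_
    rw [heq ξ, ← enorm_eq_nnnorm (((1:ℝ) + ‖ξ‖ ^ 2) ^ (-t / 2)), Real.enorm_eq_ofReal (by positivity)]
  rw [h2]
  exact hint.2

/-- Hölder with exponent 2. -/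
lemma holder2 {α : Type*} [MeasurableSpace α] {μ : Measure α} {f g : α → ℝ≥0∞}
    (hf : AEMeasurable f μ) (hg : AEMeasurable g μ) :
    ∫⁻ a, f a * g a ∂μ ≤
      (∫⁻ a, f a ^ (2:ℝ) ∂μ) ^ (1/2:ℝ) * (∫⁻ a, g a ^ (2:ℝ) ∂μ) ^ (1/2:ℝ) := by
  have h22 : (2:ℝ).HolderConjugate 2 := ⟨by norm_num, by norm_num, by norm_num⟩
  simpa using ENNReal.lintegral_mul_le_Lp_mul_Lq μ h22 hf hg

/-- Young's inequality (squared form), `L² * L¹ → L²`. -/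
lemma young_sq {φ ψ : Euc n → ℝ≥0∞} (hφ : Measurable φ) (hψ : Measurable ψ) :
    ∫⁻ ζ : Euc n, (∫⁻ ξ, φ (ζ - ξ) * ψ ξ) ^ (2:ℝ) ≤
      (∫⁻ ξ, φ ξ ^ (2:ℝ)) * ((∫⁻ ξ, ψ ξ) * (∫⁻ ξ, ψ ξ)) := by
  have h2 : (0:ℝ) ≤ 2 := by norm_num
  have hhalf : (0:ℝ) ≤ 1/2 := by norm_num
  have hsq : ∀ x : ℝ≥0∞, (x ^ (1/2:ℝ)) ^ (2:ℝ) = x := by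
    intro x; rw [← ENNReal.rpow_mul]; norm_num
  have step1 : ∀ ζ : Euc n, (∫⁻ ξ, φ (ζ - ξ) * ψ ξ) ^ (2:ℝ) ≤
      (∫⁻ ξ, φ (ζ - ξ) ^ (2:ℝ) * ψ ξ) * ∫⁻ ξ, ψ ξ := by
    intro ζ
    have hm1 : AEMeasurable (fun ξ : Euc n => φ (ζ - ξ) * ψ ξ ^ (1/2:ℝ)) volume :=
      ((hφ.comp (measurable_const.sub measurable_id)).mul
        (hψ.pow_const _)).aemeasurable
    have hm2 : AEMeasurable (fun ξ : Euc n => ψ ξ ^ (1/2:ℝ)) volume :=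
      (hψ.pow_const _).aemeasurable
    have key : ∀ ξ : Euc n, φ (ζ - ξ) * ψ ξ =
        (φ (ζ - ξ) * ψ ξ ^ (1/2:ℝ)) * ψ ξ ^ (1/2:ℝ) := by
      intro ξ
      rw [mul_assoc, ← ENNReal.rpow_add_of_nonneg _ _ hhalf hhalf]
      norm_num
    calc (∫⁻ ξ, φ (ζ - ξ) * ψ ξ) ^ (2:ℝ)
        = (∫⁻ ξ, (φ (ζ - ξ) * ψ ξ ^ (1/2:ℝ)) * ψ ξ ^ (1/2:ℝ)) ^ (2:ℝ) := by
          rw [lintegral_congr key]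
      _ ≤ ((∫⁻ ξ, (φ (ζ - ξ) * ψ ξ ^ (1/2:ℝ)) ^ (2:ℝ)) ^ (1/2:ℝ) *
            (∫⁻ ξ, (ψ ξ ^ (1/2:ℝ)) ^ (2:ℝ)) ^ (1/2:ℝ)) ^ (2:ℝ) :=
          ENNReal.rpow_le_rpow (holder2 hm1 hm2) h2
      _ = (∫⁻ ξ, φ (ζ - ξ) ^ (2:ℝ) * ψ ξ) * ∫⁻ ξ, ψ ξ := by
          rw [ENNReal.mul_rpow_of_nonneg _ _ h2, hsq, hsq]
          congr 1
          · refine lintegral_congr fun ξ => ?_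
            rw [ENNReal.mul_rpow_of_nonneg _ _ h2, hsq]
          · exact lintegral_congr fun ξ => hsq _
  have hprod : Measurable (fun p : Euc n × Euc n => φ (p.1 - p.2) ^ (2:ℝ) * ψ p.2) :=
    ((hφ.comp (measurable_fst.sub measurable_snd)).pow_const _).mul (hψ.comp measurable_snd)
  calc ∫⁻ ζ : Euc n, (∫⁻ ξ, φ (ζ - ξ) * ψ ξ) ^ (2:ℝ)
      ≤ ∫⁻ ζ : Euc n, (∫⁻ ξ, φ (ζ - ξ) ^ (2:ℝ) * ψ ξ) * ∫⁻ ξ, ψ ξ :=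
        lintegral_mono step1
    _ = (∫⁻ ζ : Euc n, ∫⁻ ξ, φ (ζ - ξ) ^ (2:ℝ) * ψ ξ) * ∫⁻ ξ, ψ ξ :=
        lintegral_mul_const _ hprod.lintegral_prod_right'
    _ = (∫⁻ ξ : Euc n, ∫⁻ ζ, φ (ζ - ξ) ^ (2:ℝ) * ψ ξ) * ∫⁻ ξ, ψ ξ := by
        rw [lintegral_lintegral_swap hprod.aemeasurable]
    _ = (∫⁻ ξ : Euc n, (∫⁻ ζ, φ ζ ^ (2:ℝ)) * ψ ξ) * ∫⁻ ξ, ψ ξ := by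
        congr 1
        refine lintegral_congr fun ξ => ?_
        have hmz : Measurable fun ζ : Euc n => φ (ζ - ξ) ^ (2:ℝ) := by
          exact (hφ.comp (measurable_id.sub measurable_const)).pow_const _
        rw [lintegral_mul_const _ hmz]
        congr 1
        exact lintegral_sub_right_eq_self (fun ζ => φ ζ ^ (2:ℝ)) ξ
    _ = (∫⁻ ξ, φ ξ ^ (2:ℝ)) * ((∫⁻ ξ, ψ ξ) * (∫⁻ ξ, ψ ξ)) := by
        rw [lintegral_const_mul _ hψ]; ring

/-- Young's inequality (squared form), commuted: `L¹ * L² → L²`. -/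
lemma young_sq' {φ ψ : Euc n → ℝ≥0∞} (hφ : Measurable φ) (hψ : Measurable ψ) :
    ∫⁻ ζ : Euc n, (∫⁻ ξ, φ (ζ - ξ) * ψ ξ) ^ (2:ℝ) ≤
      (∫⁻ ξ, ψ ξ ^ (2:ℝ)) * ((∫⁻ ξ, φ ξ) * (∫⁻ ξ, φ ξ)) := by
  have comm : ∀ ζ : Euc n, (∫⁻ ξ, φ (ζ - ξ) * ψ ξ) = ∫⁻ ξ, ψ (ζ - ξ) * φ ξ := by
    intro ζ
    have hmp := Measure.measurePreserving_sub_left (volume : Measure (Euc n)) ζ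
    have hmF : Measurable (fun x : Euc n => ψ (ζ - x) * φ x) :=
      (hψ.comp (measurable_const.sub measurable_id)).mul hφ
    have key := hmp.lintegral_comp hmF
    simp only [sub_sub_cancel] at key
    calc (∫⁻ ξ, φ (ζ - ξ) * ψ ξ) = ∫⁻ ξ, ψ ξ * φ (ζ - ξ) :=
          lintegral_congr fun ξ => mul_comm _ _
      _ = ∫⁻ ξ, ψ (ζ - ξ) * φ ξ := key
  simp_rw [comm]
  exact young_sq hψ hφ

lemma pull_const {α : Type*} [MeasurableSpace α] {μ : Measure α} {a : ℝ≥0∞} (ha : a ≠ ⊤)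
    (F : α → ℝ≥0∞) :
    (∫⁻ x, (a * F x) ^ (2:ℝ) ∂μ) ^ (1/2:ℝ) = a * (∫⁻ x, F x ^ (2:ℝ) ∂μ) ^ (1/2:ℝ) := by
  simp_rw [ENNReal.mul_rpow_of_nonneg _ _ (by norm_num : (0:ℝ) ≤ 2)]
  rw [lintegral_const_mul' _ _ (ENNReal.rpow_ne_top_of_nonneg (by norm_num) ha),
    ENNReal.mul_rpow_of_nonneg _ _ (by norm_num : (0:ℝ) ≤ 1/2), ← ENNReal.rpow_mul]
  norm_num

lemma sqrt_prod (X J : ℝ≥0∞) : (X * (J * J)) ^ (1/2:ℝ) = X ^ (1/2:ℝ) * J := by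
  rw [ENNReal.mul_rpow_of_nonneg _ _ (by norm_num : (0:ℝ) ≤ 1/2)]
  congr 1
  rw [← ennreal_rpow_two J, ← ENNReal.rpow_mul]
  norm_num

end MicrolocalAux
set_option maxHeartbeats 2000000 in
/-- **Microlocal product estimate, frequency side** (Lemma 8.8 of the paper).  Let
`s > n/2 + 1` and `c > 0`.  There is `C = C(n,s,c)` such that: for all measurable cones
`K₀, K` with `‖ζ−ξ‖ ≥ c‖ζ‖` whenever `ζ ∈ K₀`, `ξ ∉ K`, all `f` (the Fourier transform
of `u ∈ H^s`) with `⟨·⟩^s f ∈ L²`, and all `g` (the Fourier transform of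
`v ∈ H^{s−1}` with `H^s` regularity microlocally on `K`) with
`|g(ξ)| ≤ (1_K(ξ) ⟨ξ⟩^{−s} + 1_{K^c}(ξ) ⟨ξ⟩^{−(s−1)}) v₀(ξ)`, `v₀ ∈ L²`,
the convolution `h(ζ) = ∫ f(ζ−ξ) g(ξ) dξ` converges absolutely a.e. and
`‖1_{K₀} ⟨·⟩^s h‖_{L²} ≤ C ‖⟨·⟩^s f‖_{L²} ‖v₀‖_{L²}`. -/
theorem microlocal_product (n : ℕ) (hn : 1 ≤ n) (s : ℝ) (hs : (n : ℝ) / 2 + 1 < s)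
    (c : ℝ) (hc : 0 < c) :
    ∃ C : ℝ, 0 < C ∧
      ∀ K K₀ : Set (Euc n), MeasurableSet K → MeasurableSet K₀ →
        (∀ ζ ∈ K₀, ∀ ξ ∉ K, c * ‖ζ‖ ≤ ‖ζ - ξ‖) →
        ∀ (f g : Euc n → ℂ) (v₀ : Euc n → ℝ),
          Measurable f → Measurable g → MemLp v₀ 2 volume →
          MemLp (fun ξ => jb ξ ^ s • f ξ) 2 volume →
          (∀ᵐ ξ : Euc n, ‖g ξ‖ ≤
            (K.indicator (fun ξ' => jb ξ' ^ (-s)) ξ +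
              Kᶜ.indicator (fun ξ' => jb ξ' ^ (-(s - 1))) ξ) * v₀ ξ) →
          (∀ᵐ ζ : Euc n, Integrable (fun ξ => f (ζ - ξ) * g ξ)) ∧
          eLpNorm (K₀.indicator fun ζ => jb ζ ^ s • ∫ ξ, f (ζ - ξ) * g ξ) 2 volume ≤
            ENNReal.ofReal C * eLpNorm (fun ξ => jb ξ ^ s • f ξ) 2 volume *
              eLpNorm v₀ 2 volume := by
  classical
  have hn0 : (0:ℝ) ≤ (n:ℝ) := Nat.cast_nonneg n
  have hs1 : 1 < s := by linarith
  have hs0 : 0 < s := by linarith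
  have h2s : (n:ℝ) < 2 * s := by linarith
  have h2s1 : (n:ℝ) < 2 * (s - 1) := by linarith
  set m : ℝ := max 1 c⁻¹ with hm
  have hm1 : (1:ℝ) ≤ m := le_max_left _ _
  have hm0 : (0:ℝ) < m := lt_of_lt_of_le one_pos hm1
  have hms : (0:ℝ) < m ^ s := Real.rpow_pos_of_pos hm0 s
  have h2pow : (0:ℝ) < 2 ^ s := Real.rpow_pos_of_pos two_pos s
  -- the constants
  set Qs : ℝ≥0∞ := ∫⁻ ξ : Euc n, ENNReal.ofReal (jb ξ ^ (-(2 * s))) with hQsdef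
  set Qs' : ℝ≥0∞ := ∫⁻ ξ : Euc n, ENNReal.ofReal (jb ξ ^ (-(2 * (s - 1)))) with hQs'def
  have hQs_top : Qs < ⊤ := MicrolocalAux.lintegral_jb_neg_lt_top h2s
  have hQs'_top : Qs' < ⊤ := MicrolocalAux.lintegral_jb_neg_lt_top h2s1
  set Ks : ℝ≥0∞ := Qs ^ (1/2:ℝ) with hKsdef
  set Ks' : ℝ≥0∞ := Qs' ^ (1/2:ℝ) with hKs'def
  have hKs_top : Ks ≠ ⊤ := (ENNReal.rpow_lt_top_of_nonneg (by norm_num) hQs_top.ne).ne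
  have hKs'_top : Ks' ≠ ⊤ := (ENNReal.rpow_lt_top_of_nonneg (by norm_num) hQs'_top.ne).ne
  set D : ℝ≥0∞ := ENNReal.ofReal (2 ^ s) * Ks + ENNReal.ofReal (2 ^ s) * Ks +
    ENNReal.ofReal (m ^ s) * Ks' with hDdef
  have hD_top : D ≠ ⊤ := by
    rw [hDdef]
    refine ENNReal.add_ne_top.2 ⟨ENNReal.add_ne_top.2 ⟨?_, ?_⟩, ?_⟩ <;>
      exact ENNReal.mul_ne_top ENNReal.ofReal_ne_top (by assumption)
  refine ⟨D.toReal + 1, by positivity, ?_⟩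
  intro K K₀ hK hK₀ hcone f g v₀ hf hg hv₀ hF hgb
  have hDC : D ≤ ENNReal.ofReal (D.toReal + 1) := by
    calc D = ENNReal.ofReal D.toReal := (ENNReal.ofReal_toReal hD_top).symm
      _ ≤ _ := ENNReal.ofReal_le_ofReal (by linarith)
  -- measurable representative of v₀
  obtain ⟨v₁, hv₁m, hv₁⟩ : ∃ v₁ : Euc n → ℝ, Measurable v₁ ∧ v₀ =ᵐ[volume] v₁ :=
    ⟨hv₀.1.mk v₀, hv₀.1.stronglyMeasurable_mk.measurable, hv₀.1.ae_eq_mk⟩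
  -- ENNReal-valued versions
  set Fe : Euc n → ℝ≥0∞ := fun ξ => (‖f ξ‖₊ : ℝ≥0∞) with hFedef
  set Ge : Euc n → ℝ≥0∞ := fun ξ => (‖g ξ‖₊ : ℝ≥0∞) with hGedef
  set Ve : Euc n → ℝ≥0∞ := fun ξ => (‖v₁ ξ‖₊ : ℝ≥0∞) with hVedef
  set Φ : Euc n → ℝ≥0∞ := fun ξ => (‖jb ξ ^ s • f ξ‖₊ : ℝ≥0∞) with hΦdef
  set ψ₁ : Euc n → ℝ≥0∞ := fun ξ => ENNReal.ofReal (jb ξ ^ (-s)) * Ve ξ with hψ₁def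
  set ψ₂ : Euc n → ℝ≥0∞ := fun ξ => ENNReal.ofReal (jb ξ ^ (-(s - 1))) * Ve ξ with hψ₂def
  have hjbs : Measurable fun ξ : Euc n => jb ξ ^ s := MicrolocalAux.measurable_jb.pow_const s
  have hFe_m : Measurable Fe := hf.nnnorm.coe_nnreal_ennreal
  have hGe_m : Measurable Ge := hg.nnnorm.coe_nnreal_ennreal
  have hVe_m : Measurable Ve := hv₁m.nnnorm.coe_nnreal_ennreal
  have hΦ_m : Measurable Φ := ((hjbs.smul hf).nnnorm).coe_nnreal_ennreal
  have hψ₁_m : Measurable ψ₁ :=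
    (ENNReal.measurable_ofReal.comp (MicrolocalAux.measurable_jb.pow_const _)).mul hVe_m
  have hψ₂_m : Measurable ψ₂ :=
    (ENNReal.measurable_ofReal.comp (MicrolocalAux.measurable_jb.pow_const _)).mul hVe_m
  have hΦ_eq : ∀ ξ, Φ ξ = ENNReal.ofReal (jb ξ ^ s) * Fe ξ := by
    intro ξ
    rw [hΦdef]
    simp only []
    rw [nnnorm_smul, ENNReal.coe_mul,
      ← enorm_eq_nnnorm (jb ξ ^ s), Real.enorm_eq_ofReal (MicrolocalAux.jb_rpow_pos ξ s).le]
  have hVe_eq : ∀ ξ, Ve ξ = ENNReal.ofReal |v₁ ξ| := fun ξ => Real.enorm_eq_ofReal_abs _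
  -- the integrals
  set IA : ℝ≥0∞ := ∫⁻ ξ, Φ ξ ^ (2:ℝ) with hIAdef
  set IV : ℝ≥0∞ := ∫⁻ ξ, Ve ξ ^ (2:ℝ) with hIVdef
  have hA_def : eLpNorm (fun ξ => jb ξ ^ s • f ξ) 2 volume = IA ^ (1/2:ℝ) := by
    rw [eLpNorm_eq_lintegral_rpow_enorm_toReal (by simp) (by simp)]
    norm_num [hIAdef, hΦdef, enorm_eq_nnnorm]
  have hB_def : eLpNorm v₀ 2 volume = IV ^ (1/2:ℝ) := by
    rw [eLpNorm_congr_ae hv₁, eLpNorm_eq_lintegral_rpow_enorm_toReal (by simp) (by simp)]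
    norm_num [hIVdef, hVedef, enorm_eq_nnnorm]
  have hIA_top : IA ≠ ⊤ := by
    intro h
    have h2 := hF.2
    rw [hA_def, h, ENNReal.top_rpow_of_pos (by norm_num)] at h2
    exact (lt_irrefl _ h2).elim
  have hIV_top : IV ≠ ⊤ := by
    intro h
    have h2 := hv₀.2
    rw [hB_def, h, ENNReal.top_rpow_of_pos (by norm_num)] at h2
    exact (lt_irrefl _ h2).elim
  -- Hölder-type integral bounds
  have hjb2 : ∀ t : ℝ, ∀ ξ : Euc n,
      ENNReal.ofReal (jb ξ ^ (-t)) ^ (2:ℝ) = ENNReal.ofReal (jb ξ ^ (-(2 * t))) := by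
    intro t ξ
    rw [ENNReal.ofReal_rpow_of_nonneg (MicrolocalAux.jb_rpow_pos _ _).le (by norm_num),
      ← Real.rpow_mul (MicrolocalAux.jb_nonneg ξ)]
    congr 2
    ring
  have hψ₁_int : (∫⁻ ξ, ψ₁ ξ) ≤ Ks * IV ^ (1/2:ℝ) := by
    calc (∫⁻ ξ, ψ₁ ξ)
        ≤ (∫⁻ ξ, ENNReal.ofReal (jb ξ ^ (-s)) ^ (2:ℝ)) ^ (1/2:ℝ) *
          (∫⁻ ξ, Ve ξ ^ (2:ℝ)) ^ (1/2:ℝ) :=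
          MicrolocalAux.holder2
            (ENNReal.measurable_ofReal.comp (MicrolocalAux.measurable_jb.pow_const _)).aemeasurable
            hVe_m.aemeasurable
      _ = Ks * IV ^ (1/2:ℝ) := by
          rw [hKsdef, hQsdef, ← hIVdef]
          congr 2
          exact lintegral_congr (hjb2 s)
  have hψ₂_int : (∫⁻ ξ, ψ₂ ξ) ≤ Ks' * IV ^ (1/2:ℝ) := by
    calc (∫⁻ ξ, ψ₂ ξ)
        ≤ (∫⁻ ξ, ENNReal.ofReal (jb ξ ^ (-(s-1))) ^ (2:ℝ)) ^ (1/2:ℝ) *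
          (∫⁻ ξ, Ve ξ ^ (2:ℝ)) ^ (1/2:ℝ) :=
          MicrolocalAux.holder2
            (ENNReal.measurable_ofReal.comp (MicrolocalAux.measurable_jb.pow_const _)).aemeasurable
            hVe_m.aemeasurable
      _ = Ks' * IV ^ (1/2:ℝ) := by
          rw [hKs'def, hQs'def, ← hIVdef]
          congr 2
          exact lintegral_congr (hjb2 (s-1))
  have hFe_eq : ∀ ξ, Fe ξ = ENNReal.ofReal (jb ξ ^ (-s)) * Φ ξ := by
    intro ξ
    rw [hΦ_eq, ← mul_assoc, ← ENNReal.ofReal_mul (MicrolocalAux.jb_rpow_pos _ _).le,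
      ← Real.rpow_add (MicrolocalAux.jb_pos ξ)]
    simp
  have hFe_int : (∫⁻ ξ, Fe ξ) ≤ Ks * IA ^ (1/2:ℝ) := by
    calc (∫⁻ ξ, Fe ξ) = ∫⁻ ξ, ENNReal.ofReal (jb ξ ^ (-s)) * Φ ξ := lintegral_congr hFe_eq
      _ ≤ (∫⁻ ξ, ENNReal.ofReal (jb ξ ^ (-s)) ^ (2:ℝ)) ^ (1/2:ℝ) *
          (∫⁻ ξ, Φ ξ ^ (2:ℝ)) ^ (1/2:ℝ) :=
          MicrolocalAux.holder2
            (ENNReal.measurable_ofReal.comp (MicrolocalAux.measurable_jb.pow_const _)).aemeasurable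
            hΦ_m.aemeasurable
      _ = Ks * IA ^ (1/2:ℝ) := by
          rw [hKsdef, hQsdef, ← hIAdef]
          congr 2
          exact lintegral_congr (hjb2 s)
  -- a.e. bound of Ge by ψ₂
  have hGe_le : ∀ᵐ ξ : Euc n, Ge ξ ≤ ψ₂ ξ := by
    filter_upwards [hgb, hv₁] with ξ hb hv
    have hreal : ‖g ξ‖ ≤ jb ξ ^ (-(s-1)) * |v₁ ξ| := by
      rw [hv] at hb
      have hmono : jb ξ ^ (-s) ≤ jb ξ ^ (-(s-1)) :=
        Real.rpow_le_rpow_of_exponent_le (MicrolocalAux.one_le_jb ξ) (by linarith)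
      have habs : v₁ ξ ≤ |v₁ ξ| := le_abs_self _
      have habs0 : 0 ≤ |v₁ ξ| := abs_nonneg _
      have hp1 : (0:ℝ) ≤ jb ξ ^ (-s) := (MicrolocalAux.jb_rpow_pos ξ _).le
      have hp2 : (0:ℝ) ≤ jb ξ ^ (-(s-1)) := (MicrolocalAux.jb_rpow_pos ξ _).le
      by_cases hξ : ξ ∈ K
      · rw [Set.indicator_of_mem hξ, Set.indicator_of_notMem (by simpa using hξ)] at hb
        have h1 : jb ξ ^ (-s) * v₁ ξ ≤ jb ξ ^ (-s) * |v₁ ξ| :=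
          mul_le_mul_of_nonneg_left habs hp1
        have h2 : jb ξ ^ (-s) * |v₁ ξ| ≤ jb ξ ^ (-(s-1)) * |v₁ ξ| :=
          mul_le_mul_of_nonneg_right hmono habs0
        calc ‖g ξ‖ ≤ (jb ξ ^ (-s) + 0) * v₁ ξ := hb
          _ = jb ξ ^ (-s) * v₁ ξ := by ring
          _ ≤ _ := le_trans h1 h2
      · rw [Set.indicator_of_notMem hξ, Set.indicator_of_mem (by simpa using hξ)] at hb
        have h1 : jb ξ ^ (-(s-1)) * v₁ ξ ≤ jb ξ ^ (-(s-1)) * |v₁ ξ| :=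
          mul_le_mul_of_nonneg_left habs hp2
        calc ‖g ξ‖ ≤ (0 + jb ξ ^ (-(s-1))) * v₁ ξ := hb
          _ = jb ξ ^ (-(s-1)) * v₁ ξ := by ring
          _ ≤ _ := h1
    calc Ge ξ = ENNReal.ofReal ‖g ξ‖ := (ofReal_norm (g ξ)).symm
      _ ≤ ENNReal.ofReal (jb ξ ^ (-(s-1)) * |v₁ ξ|) := ENNReal.ofReal_le_ofReal hreal
      _ = ψ₂ ξ := by
          rw [hψ₂def]
          simp only []
          rw [ENNReal.ofReal_mul (MicrolocalAux.jb_rpow_pos ξ _).le, hVe_eq]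
  -- part 1 : a.e. integrability
  have hconv0_m : Measurable (fun ζ : Euc n => ∫⁻ ξ, Fe (ζ - ξ) * ψ₂ ξ) := by
    have : Measurable (fun p : Euc n × Euc n => Fe (p.1 - p.2) * ψ₂ p.2) :=
      (hFe_m.comp (measurable_fst.sub measurable_snd)).mul (hψ₂_m.comp measurable_snd)
    exact this.lintegral_prod_right'
  have hFe2_le : (∫⁻ ξ, Fe ξ ^ (2:ℝ)) ≤ IA := by
    rw [hIAdef]
    refine lintegral_mono fun ξ => ENNReal.rpow_le_rpow ?_ (by norm_num)
    rw [hΦ_eq]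
    conv_lhs => rw [← one_mul (Fe ξ)]
    exact mul_le_mul_left
      (ENNReal.one_le_ofReal.mpr (Real.one_le_rpow (MicrolocalAux.one_le_jb ξ) hs0.le)) _
  have hR_fin : ∀ᵐ ζ : Euc n, (∫⁻ ξ, Fe (ζ - ξ) * ψ₂ ξ) < ⊤ := by
    have hy := MicrolocalAux.young_sq hFe_m hψ₂_m
    have hψ₂top : (∫⁻ ξ, ψ₂ ξ) ≠ ⊤ := by
      refine ne_top_of_le_ne_top ?_ hψ₂_int
      exact ENNReal.mul_ne_top hKs'_top (ENNReal.rpow_ne_top_of_nonneg (by norm_num) hIV_top)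
    have hfin : (∫⁻ ζ : Euc n, (∫⁻ ξ, Fe (ζ - ξ) * ψ₂ ξ) ^ (2:ℝ)) ≠ ⊤ := by
      refine ne_top_of_le_ne_top ?_ hy
      exact ENNReal.mul_ne_top (ne_top_of_le_ne_top hIA_top hFe2_le)
        (ENNReal.mul_ne_top hψ₂top hψ₂top)
    have hae := ae_lt_top (hconv0_m.pow_const (2:ℝ)) hfin
    filter_upwards [hae] with ζ hζ
    by_contra htop
    rw [not_lt, top_le_iff] at htop
    rw [htop, ENNReal.top_rpow_of_pos (by norm_num)] at hζ
    exact (lt_irrefl _ hζ).elim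
  have hpart1 : ∀ᵐ ζ : Euc n, Integrable (fun ξ => f (ζ - ξ) * g ξ) := by
    filter_upwards [hR_fin] with ζ hζ
    refine ⟨((hf.comp (measurable_const.sub measurable_id)).mul hg).aestronglyMeasurable, ?_⟩
    have hle : (∫⁻ ξ, (‖f (ζ - ξ) * g ξ‖₊ : ℝ≥0∞)) ≤ ∫⁻ ξ, Fe (ζ - ξ) * ψ₂ ξ := by
      have h1 : (∫⁻ ξ, (‖f (ζ - ξ) * g ξ‖₊ : ℝ≥0∞)) = ∫⁻ ξ, Fe (ζ - ξ) * Ge ξ := by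
        refine lintegral_congr fun ξ => ?_
        rw [nnnorm_mul, ENNReal.coe_mul]
      rw [h1]
      exact lintegral_mono_ae (hGe_le.mono fun ξ h => mul_le_mul_right h _)
    exact lt_of_le_of_lt hle hζ
  -- master pointwise bound on K₀
  have hmaster : ∀ ζ ∈ K₀, ∀ᵐ ξ : Euc n,
      ENNReal.ofReal (jb ζ ^ s) * Ge ξ ≤
        ENNReal.ofReal (2 ^ s * (jb (ζ - ξ) ^ s * (jb ξ ^ (-s) * |v₁ ξ|))
          + 2 ^ s * |v₁ ξ|
          + m ^ s * (jb (ζ - ξ) ^ s * (jb ξ ^ (-(s - 1)) * |v₁ ξ|))) := by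
    intro ζ hζ
    filter_upwards [hgb, hv₁] with ξ hb hv
    rw [hv] at hb
    have hGeeq : Ge ξ = ENNReal.ofReal ‖g ξ‖ := (ofReal_norm (g ξ)).symm
    rw [hGeeq, ← ENNReal.ofReal_mul (MicrolocalAux.jb_rpow_pos ζ s).le]
    apply ENNReal.ofReal_le_ofReal
    have habs : v₁ ξ ≤ |v₁ ξ| := le_abs_self _
    have habs0 : (0:ℝ) ≤ |v₁ ξ| := abs_nonneg _
    have hpζ : (0:ℝ) ≤ jb ζ ^ s := (MicrolocalAux.jb_rpow_pos ζ s).le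
    have hpζξ : (0:ℝ) ≤ jb (ζ - ξ) ^ s := (MicrolocalAux.jb_rpow_pos _ s).le
    have hps : (0:ℝ) ≤ jb ξ ^ (-s) := (MicrolocalAux.jb_rpow_pos ξ _).le
    have hps1 : (0:ℝ) ≤ jb ξ ^ (-(s-1)) := (MicrolocalAux.jb_rpow_pos ξ _).le
    have hT1 : (0:ℝ) ≤ 2 ^ s * (jb (ζ - ξ) ^ s * (jb ξ ^ (-s) * |v₁ ξ|)) :=
      mul_nonneg h2pow.le (mul_nonneg hpζξ (mul_nonneg hps habs0))
    have hT2 : (0:ℝ) ≤ 2 ^ s * |v₁ ξ| := mul_nonneg h2pow.le habs0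
    have hT3 : (0:ℝ) ≤ m ^ s * (jb (ζ - ξ) ^ s * (jb ξ ^ (-(s-1)) * |v₁ ξ|)) :=
      mul_nonneg hms.le (mul_nonneg hpζξ (mul_nonneg hps1 habs0))
    by_cases hξ : ξ ∈ K
    · rw [Set.indicator_of_mem hξ, Set.indicator_of_notMem (by simpa using hξ)] at hb
      have h1 : ‖g ξ‖ ≤ jb ξ ^ (-s) * |v₁ ξ| := by
        calc ‖g ξ‖ ≤ (jb ξ ^ (-s) + 0) * v₁ ξ := hb
          _ = jb ξ ^ (-s) * v₁ ξ := by ring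
          _ ≤ jb ξ ^ (-s) * |v₁ ξ| := mul_le_mul_of_nonneg_left habs hps
      have htri : jb ζ ^ s ≤ 2 ^ s * (jb (ζ - ξ) ^ s + jb ξ ^ s) := by
        have h := MicrolocalAux.jb_rpow_add_le hs0.le (ζ - ξ) ξ
        rwa [sub_add_cancel] at h
      have hinv : jb ξ ^ s * jb ξ ^ (-s) = 1 := by
        rw [← Real.rpow_add (MicrolocalAux.jb_pos ξ)]
        simp
      have hmain : jb ζ ^ s * ‖g ξ‖ ≤
          2 ^ s * (jb (ζ - ξ) ^ s * (jb ξ ^ (-s) * |v₁ ξ|)) + 2 ^ s * |v₁ ξ| := by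
        calc jb ζ ^ s * ‖g ξ‖ ≤ jb ζ ^ s * (jb ξ ^ (-s) * |v₁ ξ|) :=
              mul_le_mul_of_nonneg_left (h1.trans_eq rfl) hpζ
          _ ≤ (2 ^ s * (jb (ζ - ξ) ^ s + jb ξ ^ s)) * (jb ξ ^ (-s) * |v₁ ξ|) :=
              mul_le_mul_of_nonneg_right htri (mul_nonneg hps habs0)
          _ = 2 ^ s * (jb (ζ - ξ) ^ s * (jb ξ ^ (-s) * |v₁ ξ|))
              + 2 ^ s * ((jb ξ ^ s * jb ξ ^ (-s)) * |v₁ ξ|) := by ring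
          _ = _ := by rw [hinv, one_mul]
      linarith
    · rw [Set.indicator_of_notMem hξ, Set.indicator_of_mem (by simpa using hξ)] at hb
      have h1 : ‖g ξ‖ ≤ jb ξ ^ (-(s-1)) * |v₁ ξ| := by
        calc ‖g ξ‖ ≤ (0 + jb ξ ^ (-(s-1))) * v₁ ξ := hb
          _ = jb ξ ^ (-(s-1)) * v₁ ξ := by ring
          _ ≤ _ := mul_le_mul_of_nonneg_left habs hps1
      have hcone' : jb ζ ≤ m * jb (ζ - ξ) :=
        MicrolocalAux.jb_le_of_cone hc (hcone ζ hζ ξ hξ)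
      have hζs : jb ζ ^ s ≤ m ^ s * jb (ζ - ξ) ^ s := by
        calc jb ζ ^ s ≤ (m * jb (ζ - ξ)) ^ s :=
              Real.rpow_le_rpow (MicrolocalAux.jb_nonneg ζ) hcone' hs0.le
          _ = m ^ s * jb (ζ - ξ) ^ s := Real.mul_rpow hm0.le (MicrolocalAux.jb_nonneg _)
      have hmain : jb ζ ^ s * ‖g ξ‖ ≤
          m ^ s * (jb (ζ - ξ) ^ s * (jb ξ ^ (-(s-1)) * |v₁ ξ|)) := by
        calc jb ζ ^ s * ‖g ξ‖ ≤ jb ζ ^ s * (jb ξ ^ (-(s-1)) * |v₁ ξ|) :=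
              mul_le_mul_of_nonneg_left h1 hpζ
          _ ≤ (m ^ s * jb (ζ - ξ) ^ s) * (jb ξ ^ (-(s-1)) * |v₁ ξ|) :=
              mul_le_mul_of_nonneg_right hζs (mul_nonneg hps1 habs0)
          _ = _ := by ring
      linarith
  -- pointwise splitting identity
  have hsplit : ∀ ζ ξ : Euc n,
      Fe (ζ - ξ) * ENNReal.ofReal (2 ^ s * (jb (ζ - ξ) ^ s * (jb ξ ^ (-s) * |v₁ ξ|))
          + 2 ^ s * |v₁ ξ|
          + m ^ s * (jb (ζ - ξ) ^ s * (jb ξ ^ (-(s - 1)) * |v₁ ξ|)))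
        = ENNReal.ofReal (2 ^ s) * (Φ (ζ - ξ) * ψ₁ ξ)
          + ENNReal.ofReal (2 ^ s) * (Fe (ζ - ξ) * Ve ξ)
          + ENNReal.ofReal (m ^ s) * (Φ (ζ - ξ) * ψ₂ ξ) := by
    intro ζ ξ
    have habs0 : (0:ℝ) ≤ |v₁ ξ| := abs_nonneg _
    have hpζξ : (0:ℝ) ≤ jb (ζ - ξ) ^ s := (MicrolocalAux.jb_rpow_pos _ s).le
    have hps : (0:ℝ) ≤ jb ξ ^ (-s) := (MicrolocalAux.jb_rpow_pos ξ _).le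
    have hps1 : (0:ℝ) ≤ jb ξ ^ (-(s-1)) := (MicrolocalAux.jb_rpow_pos ξ _).le
    rw [ENNReal.ofReal_add (by positivity) (by positivity),
      ENNReal.ofReal_add (by positivity) (by positivity)]
    rw [ENNReal.ofReal_mul h2pow.le, ENNReal.ofReal_mul h2pow.le, ENNReal.ofReal_mul hms.le,
      ENNReal.ofReal_mul hpζξ, ENNReal.ofReal_mul hpζξ,
      ENNReal.ofReal_mul hps, ENNReal.ofReal_mul hps1]
    rw [hψ₁def, hψ₂def]
    simp only []
    rw [hΦ_eq, hVe_eq]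
    ring
  -- the three convolutions
  set conv1 : Euc n → ℝ≥0∞ := fun ζ => ∫⁻ ξ, Φ (ζ - ξ) * ψ₁ ξ with hconv1def
  set conv2 : Euc n → ℝ≥0∞ := fun ζ => ∫⁻ ξ, Fe (ζ - ξ) * Ve ξ with hconv2def
  set conv3 : Euc n → ℝ≥0∞ := fun ζ => ∫⁻ ξ, Φ (ζ - ξ) * ψ₂ ξ with hconv3def
  have hconv1_m : Measurable conv1 :=
    ((hΦ_m.comp (measurable_fst.sub measurable_snd)).mul
      (hψ₁_m.comp measurable_snd)).lintegral_prod_right'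
  have hconv2_m : Measurable conv2 :=
    ((hFe_m.comp (measurable_fst.sub measurable_snd)).mul
      (hVe_m.comp measurable_snd)).lintegral_prod_right'
  have hconv3_m : Measurable conv3 :=
    ((hΦ_m.comp (measurable_fst.sub measurable_snd)).mul
      (hψ₂_m.comp measurable_snd)).lintegral_prod_right'
  set F₁ : Euc n → ℝ≥0∞ := fun ζ => ENNReal.ofReal (2 ^ s) * conv1 ζ with hF₁def
  set F₂ : Euc n → ℝ≥0∞ := fun ζ => ENNReal.ofReal (2 ^ s) * conv2 ζ with hF₂def
  set F₃ : Euc n → ℝ≥0∞ := fun ζ => ENNReal.ofReal (m ^ s) * conv3 ζ with hF₃def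
  have hF₁_m : Measurable F₁ := hconv1_m.const_mul _
  have hF₂_m : Measurable F₂ := hconv2_m.const_mul _
  have hF₃_m : Measurable F₃ := hconv3_m.const_mul _
  -- pointwise domination of the indicator function
  have hpoint : ∀ ζ : Euc n,
      (‖(K₀.indicator fun ζ' => jb ζ' ^ s • ∫ ξ, f (ζ' - ξ) * g ξ) ζ‖₊ : ℝ≥0∞) ≤
        F₁ ζ + F₂ ζ + F₃ ζ := by
    intro ζ
    by_cases hζ : ζ ∈ K₀
    · rw [Set.indicator_of_mem hζ]
      have h0 : (‖jb ζ ^ s • ∫ ξ, f (ζ - ξ) * g ξ‖₊ : ℝ≥0∞)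
          = ENNReal.ofReal (jb ζ ^ s) * (‖∫ ξ, f (ζ - ξ) * g ξ‖₊ : ℝ≥0∞) := by
        rw [nnnorm_smul, ENNReal.coe_mul,
          ← enorm_eq_nnnorm (jb ζ ^ s), Real.enorm_eq_ofReal (MicrolocalAux.jb_rpow_pos ζ s).le]
      have h1 : (‖∫ ξ, f (ζ - ξ) * g ξ‖₊ : ℝ≥0∞) ≤ ∫⁻ ξ, Fe (ζ - ξ) * Ge ξ := by
        refine le_trans (enorm_integral_le_lintegral_enorm _) (le_of_eq ?_)
        refine lintegral_congr fun ξ => ?_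
        rw [enorm_eq_nnnorm, nnnorm_mul, ENNReal.coe_mul]
      calc (‖jb ζ ^ s • ∫ ξ, f (ζ - ξ) * g ξ‖₊ : ℝ≥0∞)
          ≤ ENNReal.ofReal (jb ζ ^ s) * ∫⁻ ξ, Fe (ζ - ξ) * Ge ξ := by
            rw [h0]; exact mul_le_mul_right h1 _
        _ = ∫⁻ ξ, Fe (ζ - ξ) * (ENNReal.ofReal (jb ζ ^ s) * Ge ξ) := by
            rw [← lintegral_const_mul' _ _ ENNReal.ofReal_ne_top]
            exact lintegral_congr fun ξ => by ring
        _ ≤ ∫⁻ ξ, Fe (ζ - ξ) * ENNReal.ofReal (2 ^ s * (jb (ζ - ξ) ^ s * (jb ξ ^ (-s) * |v₁ ξ|))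
              + 2 ^ s * |v₁ ξ|
              + m ^ s * (jb (ζ - ξ) ^ s * (jb ξ ^ (-(s - 1)) * |v₁ ξ|))) :=
            lintegral_mono_ae ((hmaster ζ hζ).mono fun ξ h => mul_le_mul_right h _)
        _ = ∫⁻ ξ, (ENNReal.ofReal (2 ^ s) * (Φ (ζ - ξ) * ψ₁ ξ)
              + ENNReal.ofReal (2 ^ s) * (Fe (ζ - ξ) * Ve ξ)
              + ENNReal.ofReal (m ^ s) * (Φ (ζ - ξ) * ψ₂ ξ)) :=
            lintegral_congr (hsplit ζ)
        _ = F₁ ζ + F₂ ζ + F₃ ζ := by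
            have m1 : Measurable fun ξ : Euc n => ENNReal.ofReal (2 ^ s) * (Φ (ζ - ξ) * ψ₁ ξ) :=
              ((hΦ_m.comp (measurable_const.sub measurable_id)).mul hψ₁_m).const_mul _
            have m2 : Measurable fun ξ : Euc n => ENNReal.ofReal (2 ^ s) * (Fe (ζ - ξ) * Ve ξ) :=
              ((hFe_m.comp (measurable_const.sub measurable_id)).mul hVe_m).const_mul _
            rw [lintegral_add_left (by exact m1.add m2 : Measurable fun ξ : Euc n => ENNReal.ofReal (2 ^ s) * (Φ (ζ - ξ) * ψ₁ ξ) + ENNReal.ofReal (2 ^ s) * (Fe (ζ - ξ) * Ve ξ)), lintegral_add_left m1]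
            have e1 : F₁ ζ = ∫⁻ ξ, ENNReal.ofReal (2 ^ s) * (Φ (ζ - ξ) * ψ₁ ξ) :=
              (lintegral_const_mul' _ _ ENNReal.ofReal_ne_top).symm
            have e2 : F₂ ζ = ∫⁻ ξ, ENNReal.ofReal (2 ^ s) * (Fe (ζ - ξ) * Ve ξ) :=
              (lintegral_const_mul' _ _ ENNReal.ofReal_ne_top).symm
            have e3 : F₃ ζ = ∫⁻ ξ, ENNReal.ofReal (m ^ s) * (Φ (ζ - ξ) * ψ₂ ξ) :=
              (lintegral_const_mul' _ _ ENNReal.ofReal_ne_top).symm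
            rw [e1, e2, e3]
    · rw [Set.indicator_of_notMem hζ]
      simp only [nnnorm_zero, ENNReal.coe_zero]
      exact zero_le
  -- Minkowski
  have hmink : (∫⁻ ζ, (F₁ ζ + F₂ ζ + F₃ ζ) ^ (2:ℝ)) ^ (1/2:ℝ) ≤
      ENNReal.ofReal (2 ^ s) * (∫⁻ ζ, conv1 ζ ^ (2:ℝ)) ^ (1/2:ℝ)
      + ENNReal.ofReal (2 ^ s) * (∫⁻ ζ, conv2 ζ ^ (2:ℝ)) ^ (1/2:ℝ)
      + ENNReal.ofReal (m ^ s) * (∫⁻ ζ, conv3 ζ ^ (2:ℝ)) ^ (1/2:ℝ) := by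
    have h12 : (∫⁻ ζ, (F₁ ζ + F₂ ζ + F₃ ζ) ^ (2:ℝ)) ^ (1/2:ℝ) ≤
        (∫⁻ ζ, ((F₁ + F₂) ζ) ^ (2:ℝ)) ^ (1/2:ℝ) + (∫⁻ ζ, F₃ ζ ^ (2:ℝ)) ^ (1/2:ℝ) := by
      exact ENNReal.lintegral_Lp_add_le (hF₁_m.add hF₂_m).aemeasurable
        hF₃_m.aemeasurable one_le_two
    have h11 : (∫⁻ ζ, ((F₁ + F₂) ζ) ^ (2:ℝ)) ^ (1/2:ℝ) ≤
        (∫⁻ ζ, F₁ ζ ^ (2:ℝ)) ^ (1/2:ℝ) + (∫⁻ ζ, F₂ ζ ^ (2:ℝ)) ^ (1/2:ℝ) :=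
      ENNReal.lintegral_Lp_add_le hF₁_m.aemeasurable hF₂_m.aemeasurable one_le_two
    calc (∫⁻ ζ, (F₁ ζ + F₂ ζ + F₃ ζ) ^ (2:ℝ)) ^ (1/2:ℝ)
        ≤ ((∫⁻ ζ, F₁ ζ ^ (2:ℝ)) ^ (1/2:ℝ) + (∫⁻ ζ, F₂ ζ ^ (2:ℝ)) ^ (1/2:ℝ))
          + (∫⁻ ζ, F₃ ζ ^ (2:ℝ)) ^ (1/2:ℝ) := le_trans h12 (add_le_add_left h11 _)
      _ = _ := by
          rw [hF₁def, hF₂def, hF₃def]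
          simp only []
          rw [MicrolocalAux.pull_const ENNReal.ofReal_ne_top,
            MicrolocalAux.pull_const ENNReal.ofReal_ne_top,
            MicrolocalAux.pull_const ENNReal.ofReal_ne_top]
  -- Young bounds for the three convolutions
  have hN1 : (∫⁻ ζ, conv1 ζ ^ (2:ℝ)) ^ (1/2:ℝ) ≤ IA ^ (1/2:ℝ) * (Ks * IV ^ (1/2:ℝ)) := by
    have hy := MicrolocalAux.young_sq hΦ_m hψ₁_m
    calc (∫⁻ ζ, conv1 ζ ^ (2:ℝ)) ^ (1/2:ℝ)
        ≤ ((∫⁻ ξ, Φ ξ ^ (2:ℝ)) * ((∫⁻ ξ, ψ₁ ξ) * (∫⁻ ξ, ψ₁ ξ))) ^ (1/2:ℝ) :=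
          ENNReal.rpow_le_rpow hy (by norm_num)
      _ = IA ^ (1/2:ℝ) * (∫⁻ ξ, ψ₁ ξ) := by rw [MicrolocalAux.sqrt_prod, hIAdef]
      _ ≤ IA ^ (1/2:ℝ) * (Ks * IV ^ (1/2:ℝ)) := mul_le_mul_right hψ₁_int _
  have hN3 : (∫⁻ ζ, conv3 ζ ^ (2:ℝ)) ^ (1/2:ℝ) ≤ IA ^ (1/2:ℝ) * (Ks' * IV ^ (1/2:ℝ)) := by
    have hy := MicrolocalAux.young_sq hΦ_m hψ₂_m
    calc (∫⁻ ζ, conv3 ζ ^ (2:ℝ)) ^ (1/2:ℝ)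
        ≤ ((∫⁻ ξ, Φ ξ ^ (2:ℝ)) * ((∫⁻ ξ, ψ₂ ξ) * (∫⁻ ξ, ψ₂ ξ))) ^ (1/2:ℝ) :=
          ENNReal.rpow_le_rpow hy (by norm_num)
      _ = IA ^ (1/2:ℝ) * (∫⁻ ξ, ψ₂ ξ) := by rw [MicrolocalAux.sqrt_prod, hIAdef]
      _ ≤ IA ^ (1/2:ℝ) * (Ks' * IV ^ (1/2:ℝ)) := mul_le_mul_right hψ₂_int _
  have hN2 : (∫⁻ ζ, conv2 ζ ^ (2:ℝ)) ^ (1/2:ℝ) ≤ IV ^ (1/2:ℝ) * (Ks * IA ^ (1/2:ℝ)) := by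
    have hy := MicrolocalAux.young_sq' hFe_m hVe_m
    calc (∫⁻ ζ, conv2 ζ ^ (2:ℝ)) ^ (1/2:ℝ)
        ≤ ((∫⁻ ξ, Ve ξ ^ (2:ℝ)) * ((∫⁻ ξ, Fe ξ) * (∫⁻ ξ, Fe ξ))) ^ (1/2:ℝ) :=
          ENNReal.rpow_le_rpow hy (by norm_num)
      _ = IV ^ (1/2:ℝ) * (∫⁻ ξ, Fe ξ) := by rw [MicrolocalAux.sqrt_prod, hIVdef]
      _ ≤ IV ^ (1/2:ℝ) * (Ks * IA ^ (1/2:ℝ)) := mul_le_mul_right hFe_int _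
  refine ⟨hpart1, ?_⟩
  calc eLpNorm (K₀.indicator fun ζ => jb ζ ^ s • ∫ ξ, f (ζ - ξ) * g ξ) 2 volume
      = (∫⁻ ζ, (‖(K₀.indicator fun ζ' => jb ζ' ^ s • ∫ ξ, f (ζ' - ξ) * g ξ) ζ‖₊ : ℝ≥0∞)
          ^ (2:ℝ)) ^ (1/2:ℝ) := by
        rw [eLpNorm_eq_lintegral_rpow_enorm_toReal (by simp) (by simp)]
        norm_num [enorm_eq_nnnorm]
    _ ≤ (∫⁻ ζ, (F₁ ζ + F₂ ζ + F₃ ζ) ^ (2:ℝ)) ^ (1/2:ℝ) := by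
        refine ENNReal.rpow_le_rpow (lintegral_mono fun ζ => ?_) (by norm_num)
        exact ENNReal.rpow_le_rpow (hpoint ζ) (by norm_num)
    _ ≤ ENNReal.ofReal (2 ^ s) * (∫⁻ ζ, conv1 ζ ^ (2:ℝ)) ^ (1/2:ℝ)
        + ENNReal.ofReal (2 ^ s) * (∫⁻ ζ, conv2 ζ ^ (2:ℝ)) ^ (1/2:ℝ)
        + ENNReal.ofReal (m ^ s) * (∫⁻ ζ, conv3 ζ ^ (2:ℝ)) ^ (1/2:ℝ) := hmink
    _ ≤ ENNReal.ofReal (2 ^ s) * (IA ^ (1/2:ℝ) * (Ks * IV ^ (1/2:ℝ)))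
        + ENNReal.ofReal (2 ^ s) * (IV ^ (1/2:ℝ) * (Ks * IA ^ (1/2:ℝ)))
        + ENNReal.ofReal (m ^ s) * (IA ^ (1/2:ℝ) * (Ks' * IV ^ (1/2:ℝ))) :=
        add_le_add (add_le_add (mul_le_mul_right hN1 _) (mul_le_mul_right hN2 _))
          (mul_le_mul_right hN3 _)
    _ = D * IA ^ (1/2:ℝ) * IV ^ (1/2:ℝ) := by rw [hDdef]; ring
    _ ≤ ENNReal.ofReal (D.toReal + 1) * IA ^ (1/2:ℝ) * IV ^ (1/2:ℝ) :=
        mul_le_mul_left (mul_le_mul_left hDC _) _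
    _ = ENNReal.ofReal (D.toReal + 1) * eLpNorm (fun ξ => jb ξ ^ s • f ξ) 2 volume *
          eLpNorm v₀ 2 volume := by rw [hA_def, hB_def]
end
end
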